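/- arXiv:2308.06837 — 7 statements merged into one kernel-verified Lean document; each statement's English description precedes it below -/
import Mathlib

section
/- (Function lemma) For any positive integers k and n and any prime p, there exist a finite set S and a subgroup F of the additive group of functions S → ℤ/p^kℤ such that: (1) each function in F vanishes at some point of S; (2) for any s₁, …, sₙ ∈ S there exists f ∈ F with f(s₁) = … = f(sₙ) = 1. -/
open Finset

namespace FunctionLemma

attribute [local instance 10] Classical.propDecidable

variable {p k : ℕ}

/-- The ideal of multiples of `p` in `ZMod (p^k)`. -/
def Ip (p k : ℕ) : Ideal (ZMod (p ^ k)) := Ideal.span {(p : ZMod (p ^ k))}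

lemma mem_Ip {x : ZMod (p ^ k)} : x ∈ Ip p k ↔ ∃ z, x = (p : ZMod (p ^ k)) * z := by
  rw [Ip, Ideal.mem_span_singleton']
  constructor
  · rintro ⟨a, ha⟩; exact ⟨a, by rw [← ha, mul_comm]⟩
  · rintro ⟨z, hz⟩; exact ⟨z, by rw [hz, mul_comm]⟩

section basic

variable (hp : p.Prime) (hk : 1 ≤ k)

include hp hk

lemma qpos : 0 < p ^ k := Nat.pow_pos hp.pos

lemma q1lt : 1 < p ^ k := by
  calc 1 < p := hp.one_lt
  _ = p ^ 1 := (pow_one p).symm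
  _ ≤ p ^ k := Nat.pow_le_pow_right hp.pos hk

lemma neZeroQ : NeZero (p ^ k) := ⟨(qpos hp hk).ne'⟩

lemma dvd_val_of_mem {x : ZMod (p ^ k)} (h : x ∈ Ip p k) : p ∣ x.val := by
  haveI := neZeroQ hp hk
  obtain ⟨z, hz⟩ := mem_Ip.mp h
  have hq : p ∣ p ^ k := dvd_pow_self p (by omega)
  rw [hz, ZMod.val_mul]
  rw [Nat.dvd_mod_iff hq]
  apply Dvd.dvd.mul_right
  rw [ZMod.val_natCast]
  rw [Nat.dvd_mod_iff hq]

lemma mem_of_dvd_val {x : ZMod (p ^ k)} (h : p ∣ x.val) : x ∈ Ip p k := by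
  haveI := neZeroQ hp hk
  obtain ⟨c, hc⟩ := h
  refine mem_Ip.mpr ⟨(c : ZMod (p ^ k)), ?_⟩
  have hx : ((x.val : ℕ) : ZMod (p ^ k)) = x := ZMod.natCast_rightInverse x
  rw [← hx, hc]
  push_cast
  ring

lemma unit_of_not_mem {x : ZMod (p ^ k)} (h : x ∉ Ip p k) : IsUnit x := by
  haveI := neZeroQ hp hk
  have hnd : ¬ p ∣ x.val := fun hd => h (mem_of_dvd_val hp hk hd)
  have hc : Nat.Coprime (x.val) (p ^ k) :=
    Nat.Coprime.pow_right k (((Nat.Prime.coprime_iff_not_dvd hp).mpr hnd).symm)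
  have : ((x.val : ℕ) : ZMod (p ^ k)) = x := ZMod.natCast_rightInverse x
  rw [← this]
  exact ⟨ZMod.unitOfCoprime x.val hc, ZMod.coe_unitOfCoprime x.val hc⟩

lemma one_not_mem : (1 : ZMod (p ^ k)) ∉ Ip p k := by
  haveI := neZeroQ hp hk
  haveI : Fact (1 < p ^ k) := ⟨q1lt hp hk⟩
  intro h
  have := dvd_val_of_mem hp hk h
  rw [ZMod.val_one] at this
  exact Nat.Prime.one_lt hp |>.ne' (Nat.dvd_one.mp this)

lemma ppow_eq_zero : ((p : ZMod (p ^ k)))^k = 0 := by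
  have : ((p ^ k : ℕ) : ZMod (p ^ k)) = 0 := ZMod.natCast_self _
  push_cast at this
  exact this

end basic

/-- dot product -/
def dotv {V : ℕ} (a b : Fin V → ZMod (p ^ k)) : ZMod (p ^ k) := ∑ t, a t * b t

lemma dotv_add_right {V : ℕ} (a b c : Fin V → ZMod (p ^ k)) :
    dotv a (b + c) = dotv a b + dotv a c := by
  simp [dotv, mul_add, Finset.sum_add_distrib]

lemma dotv_sub_right {V : ℕ} (a b c : Fin V → ZMod (p ^ k)) :
    dotv a (b - c) = dotv a b - dotv a c := by
  simp [dotv, mul_sub, Finset.sum_sub_distrib]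

lemma dotv_smul_right {V : ℕ} (r : ZMod (p ^ k)) (a b : Fin V → ZMod (p ^ k)) :
    dotv a (r • b) = r * dotv a b := by
  rw [dotv, dotv, Finset.mul_sum]
  exact Finset.sum_congr rfl fun t _ => by simp [mul_comm, mul_left_comm]

lemma dotv_zero_right {V : ℕ} (a : Fin V → ZMod (p ^ k)) : dotv a 0 = 0 := by
  simp [dotv]

lemma dotv_sum_right {V : ℕ} {ι : Type*} (s : Finset ι) (a : Fin V → ZMod (p ^ k))
    (f : ι → Fin V → ZMod (p ^ k)) :
    dotv a (∑ j ∈ s, f j) = ∑ j ∈ s, dotv a (f j) := by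
  simp only [dotv, Finset.sum_apply, Finset.mul_sum]
  exact Finset.sum_comm

lemma dotv_single {V : ℕ} (a : Fin V → ZMod (p ^ k)) (t : Fin V) :
    dotv a (Pi.single t 1) = a t := by
  rw [dotv, Finset.sum_eq_single t]
  · simp
  · intro s _ hs; simp [Pi.single_apply, hs]
  · simp

/-- mod-p independence of a family of rows -/
def IND {V r : ℕ} (w : Fin r → Fin V → ZMod (p ^ k)) : Prop :=
  ∀ c : Fin r → ZMod (p ^ k), (∀ t, (∑ i, c i * w i t) ∈ Ip p k) → ∀ i, c i ∈ Ip p k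


section dual

variable (hp : p.Prime) (hk : 1 ≤ k)

lemma IND_restrict {V r : ℕ} {w : Fin (r+1) → Fin V → ZMod (p ^ k)} (hw : IND w) :
    IND (fun i : Fin r => w i.castSucc) := by
  intro c hc i
  have key := hw (Fin.snoc c 0) ?_ i.castSucc
  · rwa [Fin.snoc_castSucc] at key
  · intro t
    rw [Fin.sum_univ_castSucc]
    simp only [Fin.snoc_castSucc, Fin.snoc_last, zero_mul, add_zero]
    exact hc t

include hp hk

lemma dual {V : ℕ} : ∀ (r : ℕ) (w : Fin r → Fin V → ZMod (p ^ k)), IND w →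
    ∃ Z : Fin r → Fin V → ZMod (p ^ k),
      ∀ i j, dotv (w i) (Z j) - (if i = j then 1 else 0) ∈ Ip p k := by
  intro r
  induction r with
  | zero => exact fun w _ => ⟨Fin.elim0, fun i => i.elim0⟩
  | succ r IH =>
    intro w hw
    set w' : Fin r → Fin V → ZMod (p ^ k) := fun i => w i.castSucc with hw'def
    obtain ⟨Z', hZ'⟩ := IH w' (IND_restrict hw)
    set a : Fin r → ZMod (p ^ k) := fun j => dotv (w (Fin.last r)) (Z' j) with hadef
    -- key computation: for any x, dotv with the "correction" of x
    have comp : ∀ (b : Fin V → ZMod (p ^ k)) (t : Fin V),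
        dotv b (Pi.single t 1 - ∑ j, (w' j t) • Z' j)
          = b t - ∑ j, w' j t * dotv b (Z' j) := by
      intro b t
      rw [dotv_sub_right, dotv_single, dotv_sum_right]
      congr 1
      exact Finset.sum_congr rfl fun j _ => dotv_smul_right _ _ _
    have hIcomp : ∀ (i : Fin r) (t : Fin V),
        dotv (w' i) (Pi.single t 1 - ∑ j, (w' j t) • Z' j) ∈ Ip p k := by
      intro i t
      rw [comp]
      have exp : w' i t - ∑ j, w' j t * dotv (w' i) (Z' j)
          = -∑ j, w' j t * (dotv (w' i) (Z' j) - if i = j then 1 else 0) := by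
        simp only [mul_sub, Finset.sum_sub_distrib, neg_sub]
        have : ∑ j, w' j t * (if i = j then (1 : ZMod (p^k)) else 0) = w' i t := by
          simp [mul_ite, Finset.sum_ite_eq]
        rw [this]
      rw [exp]
      refine neg_mem (Submodule.sum_mem _ fun j _ => Ideal.mul_mem_left _ _ (hZ' i j))
    have key : ∃ z, (∀ i, dotv (w' i) z ∈ Ip p k) ∧
        dotv (w (Fin.last r)) z ∉ Ip p k := by
      by_contra hno
      push_neg at hno
      have hc : ∀ t, (∑ i, (Fin.snoc (fun j => -(a j)) (1 : ZMod (p ^ k)) : Fin (r+1) → ZMod (p ^ k)) i * w i t) ∈ Ip p k := by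
        intro t
        have h2 := hno _ (fun i => hIcomp i t)
        rw [comp] at h2
        have heq : (∑ i, (Fin.snoc (fun j => -(a j)) (1 : ZMod (p ^ k)) : Fin (r+1) → ZMod (p ^ k)) i * w i t)
            = w (Fin.last r) t - ∑ j, w' j t * a j := by
          rw [Fin.sum_univ_castSucc]
          simp only [Fin.snoc_castSucc, Fin.snoc_last, one_mul]
          have : ∑ i : Fin r, -(a i) * w i.castSucc t = -∑ j, w' j t * a j := by
            rw [← Finset.sum_neg_distrib]
            exact Finset.sum_congr rfl fun j _ => by rw [hw'def]; ring
          rw [this]; ring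
        rw [heq]
        exact h2
      have := hw _ hc (Fin.last r)
      rw [Fin.snoc_last] at this
      exact one_not_mem hp hk this
    obtain ⟨z, hz1, hz2⟩ := key
    have hu : IsUnit (dotv (w (Fin.last r)) z) := unit_of_not_mem hp hk hz2
    set zl : Fin V → ZMod (p ^ k) := (↑hu.unit⁻¹ : ZMod (p ^ k)) • z with hzldef
    have hzl_last : dotv (w (Fin.last r)) zl = 1 := by
      rw [hzldef, dotv_smul_right]
      exact hu.val_inv_mul
    have hzl_i : ∀ i : Fin r, dotv (w' i) zl ∈ Ip p k := by
      intro i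
      rw [hzldef, dotv_smul_right]
      exact Ideal.mul_mem_left _ _ (hz1 i)
    refine ⟨Fin.snoc (fun j => Z' j - a j • zl) zl, ?_⟩
    intro i j
    induction i using Fin.lastCases with
    | last =>
      induction j using Fin.lastCases with
      | last =>
        simp only [Fin.snoc_last, hzl_last, if_pos rfl]
        simpa using (Ip p k).zero_mem
      | cast j' =>
        rw [Fin.snoc_castSucc]
        rw [dotv_sub_right, dotv_smul_right, hzl_last]
        have : (Fin.last r = j'.castSucc) = False := by
          simp [(Fin.castSucc_lt_last j').ne']
        rw [if_neg (by simp [this])]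
        have : dotv (w (Fin.last r)) (Z' j') - a j' * 1 - 0 = 0 := by
          rw [hadef]; ring
        rw [this]
        exact (Ip p k).zero_mem
    | cast i' =>
      induction j using Fin.lastCases with
      | last =>
        rw [Fin.snoc_last]
        rw [if_neg (by exact (Fin.castSucc_lt_last i').ne)]
        simpa using hzl_i i'
      | cast j' =>
        rw [Fin.snoc_castSucc, dotv_sub_right, dotv_smul_right]
        have hif : (if i'.castSucc = j'.castSucc then (1 : ZMod (p^k)) else 0)
            = (if i' = j' then 1 else 0) := by
          simp [Fin.castSucc_inj]
        rw [hif]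
        have : dotv (w i'.castSucc) (Z' j') - a j' * dotv (w i'.castSucc) zl - (if i' = j' then 1 else 0)
            = (dotv (w' i') (Z' j') - (if i' = j' then 1 else 0)) - a j' * dotv (w' i') zl := by
          rw [hw'def]; ring
        rw [this]
        exact sub_mem (hZ' i' j') (Ideal.mul_mem_left _ _ (hzl_i i'))

lemma solve {V r : ℕ} (w : Fin r → Fin V → ZMod (p ^ k)) (hw : IND w) :
    ∃ v, ∀ i, dotv (w i) v = 1 := by
  obtain ⟨Z, hZ⟩ := dual hp hk r w hw
  have key : ∀ y : Fin r → ZMod (p ^ k), ∃ v, ∀ i, y i - dotv (w i) v ∈ Ip p k := by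
    intro y
    refine ⟨∑ j, y j • Z j, fun i => ?_⟩
    rw [dotv_sum_right]
    have exp : y i - ∑ j, dotv (w i) (y j • Z j)
        = -∑ j, y j * (dotv (w i) (Z j) - if i = j then 1 else 0) := by
      have h1 : ∀ j, dotv (w i) (y j • Z j) = y j * dotv (w i) (Z j) :=
        fun j => dotv_smul_right _ _ _
      simp only [h1, mul_sub, Finset.sum_sub_distrib]
      have : ∑ j, y j * (if i = j then (1 : ZMod (p^k)) else 0) = y i := by
        simp [mul_ite, Finset.sum_ite_eq]
      rw [this]
      ring
    rw [exp]
    exact neg_mem (Submodule.sum_mem _ fun j _ => Ideal.mul_mem_left _ _ (hZ i j))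
  have lift : ∀ (j : ℕ) (y : Fin r → ZMod (p ^ k)),
      ∃ (v : Fin V → ZMod (p ^ k)) (z : Fin r → ZMod (p ^ k)),
      ∀ i, y i - dotv (w i) v = (p : ZMod (p ^ k))^j * z i := by
    intro j
    induction j with
    | zero =>
      intro y
      exact ⟨0, y, fun i => by rw [dotv_zero_right]; simp⟩
    | succ j IH =>
      intro y
      obtain ⟨v, z, hvz⟩ := IH y
      obtain ⟨v', hv'⟩ := key z
      choose e he using fun i => (mem_Ip.mp (hv' i))
      refine ⟨v + (p : ZMod (p ^ k))^j • v', e, fun i => ?_⟩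
      rw [dotv_add_right, dotv_smul_right]
      have h1 := hvz i
      have h2 := he i
      calc y i - (dotv (w i) v + (p : ZMod (p^k))^j * dotv (w i) v')
          = (y i - dotv (w i) v) - (p : ZMod (p^k))^j * dotv (w i) v' := by ring
        _ = (p : ZMod (p^k))^j * (z i - dotv (w i) v') := by rw [h1]; ring
        _ = (p : ZMod (p^k))^j * ((p : ZMod (p^k)) * e i) := by rw [← h2]
        _ = (p : ZMod (p^k))^(j+1) * e i := by ring
  obtain ⟨v, z, hvz⟩ := lift k (fun _ => 1)
  refine ⟨v, fun i => ?_⟩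
  have := hvz i
  rw [ppow_eq_zero hp hk, zero_mul] at this
  exact (sub_eq_zero.mp this).symm

end dual


section genericcount

variable {G H : Type*} [AddCommGroup G] [AddCommGroup H] [Fintype G] [Fintype H]
variable [DecidableEq G] [DecidableEq H]

lemma fiber_le (f : G →+ H) (y : H) :
    (univ.filter (fun x => f x = y)).card ≤ (univ.filter (fun x => f x = 0)).card := by
  rcases (univ.filter (fun x => f x = y)).eq_empty_or_nonempty with h | ⟨x₀, hx₀⟩
  · simp [h]
  · have hx₀' : f x₀ = y := (mem_filter.mp hx₀).2
    apply Finset.card_le_card_of_injOn (fun x => x - x₀)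
    · intro x hx
      simp only [mem_coe, mem_filter, mem_univ, true_and] at hx ⊢
      rw [map_sub, hx, hx₀', sub_self]
    · intro a _ b _ hab
      exact sub_left_inj.mp hab

lemma preimage_le (f : G →+ H) (B : Finset H) :
    (univ.filter (fun x => f x ∈ B)).card
      ≤ B.card * (univ.filter (fun x => f x = 0)).card := by
  have h1 : (univ.filter (fun x => f x ∈ B)).card
      = ∑ b ∈ B, ((univ.filter (fun x => f x ∈ B)).filter (fun x => f x = b)).card := by
    apply Finset.card_eq_sum_card_fiberwise
    intro x hx
    exact (mem_filter.mp hx).2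
  rw [h1]
  calc ∑ b ∈ B, ((univ.filter (fun x => f x ∈ B)).filter (fun x => f x = b)).card
      ≤ ∑ b ∈ B, (univ.filter (fun x => f x = 0)).card := by
        apply Finset.sum_le_sum
        intro b _
        calc ((univ.filter (fun x => f x ∈ B)).filter (fun x => f x = b)).card
            ≤ (univ.filter (fun x => f x = b)).card := by
              apply Finset.card_le_card
              intro x hx
              simp only [mem_filter, mem_univ, true_and] at hx ⊢
              exact hx.2
          _ ≤ _ := fiber_le f b
    _ = B.card * (univ.filter (fun x => f x = 0)).card := by
        rw [Finset.sum_const, smul_eq_mul]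

lemma pi_filter_card {α X : Type*} [Fintype α] [DecidableEq α] [Fintype X] [DecidableEq X]
    (P : X → Prop) [DecidablePred P] [∀ ω : α → X, Decidable (∀ i, P (ω i))] :
    (univ.filter fun ω : α → X => ∀ i, P (ω i)).card
      = ((univ.filter fun x : X => P x).card) ^ (Fintype.card α) := by
  rw [← Fintype.card_subtype, ← Fintype.card_subtype]
  rw [Fintype.card_congr (Equiv.subtypePiEquivPi (p := fun _ a => P a))]
  rw [Fintype.card_pi, Finset.prod_const, Finset.card_univ]

end genericcount


section cardIp

variable (hp : p.Prime) (hk : 1 ≤ k)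
include hp hk

lemma card_Ip [NeZero (p ^ k)] :
    (univ.filter (fun x : ZMod (p ^ k) => x ∈ Ip p k)).card ≤ p ^ (k - 1) := by
  have hpp : p * p ^ (k - 1) = p ^ k := by
    rw [← pow_succ']; congr 1; omega
  set μ : ZMod (p ^ k) →+ ZMod (p ^ k) :=
    AddMonoidHom.mk' (fun z => (p : ZMod (p ^ k)) * z) (fun a b => by ring) with hμ
  have hμapp : ∀ z, μ z = (p : ZMod (p ^ k)) * z := fun z => by
    rw [hμ, AddMonoidHom.mk'_apply]
  have himg : (univ.filter (fun x : ZMod (p ^ k) => x ∈ Ip p k)) = univ.image μ := by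
    ext x
    simp only [mem_filter, mem_univ, true_and, Finset.mem_image]
    rw [mem_Ip]
    constructor
    · rintro ⟨z, hz⟩
      exact ⟨z, by rw [hμapp]; exact hz.symm⟩
    · rintro ⟨z, hz⟩
      exact ⟨z, by rw [← hz, hμapp]⟩
  rw [himg]
  have hfib : ∀ y ∈ univ.image μ, p ≤ (univ.filter (fun z => μ z = y)).card := by
    intro y hy
    obtain ⟨z₀, _, hz₀⟩ := Finset.mem_image.mp hy
    have hz₀' : (p : ZMod (p ^ k)) * z₀ = y := by rw [← hμapp]; exact hz₀
    have hcard : (univ : Finset (Fin p)).card ≤ (univ.filter (fun z => μ z = y)).card := by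
      apply Finset.card_le_card_of_injOn
        (fun j : Fin p => z₀ + (((j : ℕ) * p ^ (k - 1) : ℕ) : ZMod (p ^ k)))
      · intro j _
        simp only [mem_coe, mem_filter, mem_univ, true_and]
        rw [hμapp, mul_add, hz₀']
        have hps : ((p : ZMod (p ^ k))) ^ k = (p : ZMod (p ^ k)) * (p : ZMod (p ^ k)) ^ (k - 1) := by
          have l : ((p : ZMod (p ^ k))) ^ k = 0 := by
            have h0 : ((p ^ k : ℕ) : ZMod (p ^ k)) = 0 := ZMod.natCast_self _
            push_cast at h0
            exact h0
          have r : (p : ZMod (p ^ k)) * (p : ZMod (p ^ k)) ^ (k - 1) = 0 := by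
            have h0 : ((p * p ^ (k - 1) : ℕ) : ZMod (p ^ k)) = 0 := by
              rw [hpp]; exact ZMod.natCast_self _
            push_cast at h0
            exact h0
          rw [l, r]
        have h2 : (p : ZMod (p ^ k)) * (((j : ℕ) * p ^ (k - 1) : ℕ) : ZMod (p ^ k))
            = (((j : ℕ) * p ^ k : ℕ) : ZMod (p ^ k)) := by
          push_cast
          rw [hps]
          ring
        rw [h2]
        have h3 : (((j : ℕ) * p ^ k : ℕ) : ZMod (p ^ k)) = 0 := by
          rw [Nat.cast_mul, ZMod.natCast_self, mul_zero]
        rw [h3, add_zero]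
      · intro a _ b _ hab
        have h1 : (((a : ℕ) * p ^ (k - 1) : ℕ) : ZMod (p ^ k))
            = (((b : ℕ) * p ^ (k - 1) : ℕ) : ZMod (p ^ k)) := add_left_cancel hab
        have hlt : ∀ j : Fin p, (j : ℕ) * p ^ (k - 1) < p ^ k := by
          intro j
          calc (j : ℕ) * p ^ (k - 1) < p * p ^ (k - 1) :=
                mul_lt_mul_of_pos_right j.isLt (Nat.pow_pos hp.pos)
            _ = p ^ k := hpp
        have h4 := congrArg ZMod.val h1
        rw [ZMod.val_natCast, ZMod.val_natCast,
          Nat.mod_eq_of_lt (hlt a), Nat.mod_eq_of_lt (hlt b)] at h4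
        exact Fin.ext (Nat.eq_of_mul_eq_mul_right (Nat.pow_pos hp.pos) h4)
    simpa using hcard
  have hsum : (Fintype.card (ZMod (p ^ k)))
      = ∑ y ∈ univ.image μ, (univ.filter (fun z => μ z = y)).card := by
    rw [← Finset.card_univ]
    apply Finset.card_eq_sum_card_fiberwise
    intro x _
    exact Finset.mem_image_of_mem μ (mem_univ x)
  have hge : (univ.image μ).card * p ≤ p ^ k := by
    calc (univ.image μ).card * p = ∑ _y ∈ univ.image μ, p := by
          rw [Finset.sum_const, smul_eq_mul]
      _ ≤ ∑ y ∈ univ.image μ, (univ.filter (fun z => μ z = y)).card :=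
          Finset.sum_le_sum hfib
      _ = Fintype.card (ZMod (p ^ k)) := hsum.symm
      _ = p ^ k := ZMod.card _
  have hpk : p ^ k = p ^ (k - 1) * p := by rw [mul_comm, hpp]
  exact Nat.le_of_mul_le_mul_right (hge.trans_eq hpk) hp.pos

end cardIp


section badsets

variable (hp : p.Prime) (hk : 1 ≤ k)

/-- goodness A : every vector is "covered" (killed by some row) -/
def GoodA (V m : ℕ) (ω : Fin m → Fin V → ZMod (p ^ k)) : Prop :=
  ∀ v, ∃ i, dotv (ω i) v = 0

/-- goodness B : any `n` distinct rows are mod-`p` independent -/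
def GoodB (V m n : ℕ) (ω : Fin m → Fin V → ZMod (p ^ k)) : Prop :=
  ∀ σ : Fin n → Fin m, Function.Injective σ → IND (fun j => ω (σ j))

include hp hk

lemma badA_bound [NeZero (p ^ k)] (V m : ℕ) (hV : 1 ≤ V) (hm : 1 ≤ m) :
    (univ.filter (fun ω : Fin m → Fin V → ZMod (p ^ k) => ¬ GoodA V m ω)).card
      ≤ (p ^ k) ^ V * ((p ^ k - 1) * (p ^ k) ^ (V - 1)) ^ m := by
  classical
  set q := p ^ k with hq
  have hqpos : 0 < q := qpos hp hk
  set Av : (Fin V → ZMod (p ^ k)) → Finset (Fin m → Fin V → ZMod (p ^ k)) :=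
    fun v => univ.filter (fun ω => ∀ i, dotv (ω i) v ≠ 0) with hAv
  have hsub : (univ.filter (fun ω : Fin m → Fin V → ZMod (p ^ k) => ¬ GoodA V m ω))
      ⊆ (univ : Finset (Fin V → ZMod (p ^ k))).biUnion Av := by
    intro ω hω
    have := (mem_filter.mp hω).2
    rw [GoodA] at this
    push_neg at this
    obtain ⟨v, hv⟩ := this
    exact Finset.mem_biUnion.mpr ⟨v, mem_univ v,
      mem_filter.mpr ⟨mem_univ ω, hv⟩⟩
  have hper : ∀ v, (Av v).card ≤ ((q - 1) * q ^ (V - 1)) ^ m := by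
    intro v
    have hAcard : (Av v).card
        = ((univ.filter (fun w : Fin V → ZMod (p ^ k) => dotv w v ≠ 0)).card) ^ m := by
      rw [hAv]
      show (univ.filter (fun ω : Fin m → Fin V → ZMod (p ^ k) =>
        ∀ i, dotv (ω i) v ≠ 0)).card = _
      have := pi_filter_card (α := Fin m) (X := Fin V → ZMod (p ^ k))
        (fun w => dotv w v ≠ 0)
      rw [Fintype.card_fin] at this
      exact this
    rw [hAcard]
    apply Nat.pow_le_pow_left
    by_cases hv : v = 0
    · have : (univ.filter (fun w : Fin V → ZMod (p ^ k) => dotv w v ≠ 0)) = ∅ := by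
        apply Finset.filter_false_of_mem
        intro w _
        rw [hv, dotv_zero_right]
        simp
      rw [this]
      simp
    · -- the kernel of w ↦ dotv w v has at least q^(V-1) elements
      set ψ : (Fin V → ZMod (p ^ k)) →+ ZMod (p ^ k) :=
        AddMonoidHom.mk' (fun w => dotv w v) (fun a b => by
          simp [dotv, add_mul, Finset.sum_add_distrib]) with hψ
      have hψapp : ∀ w, ψ w = dotv w v := fun w => by
        rfl
      have hcardX : Fintype.card (Fin V → ZMod (p ^ k)) = q ^ V := by
        rw [Fintype.card_fun, ZMod.card, Fintype.card_fin]
      have hsumfib : Fintype.card (Fin V → ZMod (p ^ k))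
          = ∑ y : ZMod (p ^ k), (univ.filter (fun w => ψ w = y)).card := by
        rw [← Finset.card_univ]
        exact Finset.card_eq_sum_card_fiberwise (fun x _ => mem_univ (ψ x))
      have hle : q ^ V ≤ q * (univ.filter (fun w => ψ w = 0)).card := by
        calc q ^ V = ∑ y : ZMod (p ^ k), (univ.filter (fun w => ψ w = y)).card := by
              rw [← hsumfib, hcardX]
          _ ≤ ∑ _y : ZMod (p ^ k), (univ.filter (fun w => ψ w = 0)).card :=
              Finset.sum_le_sum (fun y _ => fiber_le ψ y)
          _ = q * (univ.filter (fun w => ψ w = 0)).card := by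
              rw [Finset.sum_const, smul_eq_mul, Finset.card_univ, ZMod.card]
      have hker : q ^ (V - 1) ≤ (univ.filter (fun w => ψ w = 0)).card := by
        have hqv : q ^ V = q * q ^ (V - 1) := by
          rw [← pow_succ']; congr 1; omega
        rw [hqv] at hle
        exact Nat.le_of_mul_le_mul_left hle hqpos
      have hsplit : (univ.filter (fun w : Fin V → ZMod (p ^ k) => ψ w = 0)).card
          + (univ.filter (fun w : Fin V → ZMod (p ^ k) => ¬ (ψ w = 0))).card
          = q ^ V := by
        rw [Finset.card_filter_add_card_filter_not, Finset.card_univ, hcardX]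
      have heqfilter : (univ.filter (fun w : Fin V → ZMod (p ^ k) => dotv w v ≠ 0))
          = (univ.filter (fun w : Fin V → ZMod (p ^ k) => ¬ (ψ w = 0))) := by
        apply Finset.filter_congr
        intro w _
        rw [hψapp]
      rw [heqfilter]
      have hqv : q ^ V = q * q ^ (V - 1) := by
        rw [← pow_succ']; congr 1; omega
      have hsubmul : (q - 1) * q ^ (V - 1) = q * q ^ (V - 1) - q ^ (V - 1) := by
        rw [Nat.sub_mul, one_mul]
      omega
  calc (univ.filter (fun ω : Fin m → Fin V → ZMod (p ^ k) => ¬ GoodA V m ω)).card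
      ≤ ((univ : Finset (Fin V → ZMod (p ^ k))).biUnion Av).card := Finset.card_le_card hsub
    _ ≤ ∑ v : Fin V → ZMod (p ^ k), (Av v).card := Finset.card_biUnion_le
    _ ≤ ∑ _v : Fin V → ZMod (p ^ k), ((q - 1) * q ^ (V - 1)) ^ m :=
        Finset.sum_le_sum (fun v _ => hper v)
    _ = (p ^ k) ^ V * ((p ^ k - 1) * (p ^ k) ^ (V - 1)) ^ m := by
        rw [Finset.sum_const, smul_eq_mul, Finset.card_univ, Fintype.card_fun,
          ZMod.card, Fintype.card_fin]

lemma badB_pair_bound [NeZero (p ^ k)] (V m n : ℕ) (σ : Fin n → Fin m)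
    (hσ : Function.Injective σ) (c : Fin n → ZMod (p ^ k)) (i₀ : Fin n)
    (hc : c i₀ ∉ Ip p k) :
    (univ.filter (fun ω : Fin m → Fin V → ZMod (p ^ k) =>
        ∀ t, (∑ i, c i * ω (σ i) t) ∈ Ip p k)).card
      ≤ (p ^ (k - 1)) ^ V * ((p ^ k) ^ V) ^ (m - 1) := by
  classical
  set Φ : (Fin m → Fin V → ZMod (p ^ k)) →+ (Fin V → ZMod (p ^ k)) :=
    AddMonoidHom.mk' (fun ω => fun t => ∑ i, c i * ω (σ i) t) (fun a b => by
      funext t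
      simp [mul_add, Finset.sum_add_distrib]) with hΦ
  have hΦapp : ∀ ω t, Φ ω t = ∑ i, c i * ω (σ i) t := fun ω t => by
    rw [hΦ, AddMonoidHom.mk'_apply]
  set IXf : Finset (Fin V → ZMod (p ^ k)) :=
    univ.filter (fun x => ∀ t, x t ∈ Ip p k) with hIXf
  have hsub : (univ.filter (fun ω : Fin m → Fin V → ZMod (p ^ k) =>
      ∀ t, (∑ i, c i * ω (σ i) t) ∈ Ip p k))
      ⊆ (univ.filter (fun ω => Φ ω ∈ IXf)) := by
    intro ω hω
    rw [mem_filter] at hω ⊢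
    refine ⟨hω.1, ?_⟩
    rw [hIXf, mem_filter]
    refine ⟨mem_univ _, fun t => ?_⟩
    rw [hΦapp]
    exact hω.2 t
  calc (univ.filter (fun ω : Fin m → Fin V → ZMod (p ^ k) =>
        ∀ t, (∑ i, c i * ω (σ i) t) ∈ Ip p k)).card
      ≤ (univ.filter (fun ω => Φ ω ∈ IXf)).card := Finset.card_le_card hsub
    _ ≤ IXf.card * (univ.filter (fun ω => Φ ω = 0)).card := preimage_le Φ IXf
    _ ≤ (p ^ (k - 1)) ^ V * ((p ^ k) ^ V) ^ (m - 1) := by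
        apply Nat.mul_le_mul
        · -- card of IXf
          rw [hIXf]
          have := pi_filter_card (α := Fin V) (X := ZMod (p ^ k))
            (fun x => x ∈ Ip p k)
          rw [Fintype.card_fin] at this
          rw [this]
          exact Nat.pow_le_pow_left (card_Ip hp hk) V
        · -- kernel bound
          have hu : IsUnit (c i₀) := unit_of_not_mem hp hk hc
          have : (univ.filter (fun ω : Fin m → Fin V → ZMod (p ^ k) => Φ ω = 0)).card
              ≤ Fintype.card ({j : Fin m // j ≠ σ i₀} → (Fin V → ZMod (p ^ k))) := by
            rw [← Finset.card_univ]
            apply Finset.card_le_card_of_injOn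
              (fun ω => fun j : {j : Fin m // j ≠ σ i₀} => ω j.1)
            · intro ω _; exact mem_univ _
            · intro ω hω ω' hω' hres
              have hker : Φ ω = 0 := (mem_filter.mp hω).2
              have hker' : Φ ω' = 0 := (mem_filter.mp hω').2
              funext j
              by_cases hj : j = σ i₀
              · subst hj
                funext t
                have h0 : ∑ i, c i * ω (σ i) t = 0 := by
                  rw [← hΦapp, hker]; rfl
                have h0' : ∑ i, c i * ω' (σ i) t = 0 := by
                  rw [← hΦapp, hker']; rfl
                have hsplit : ∀ ρ : Fin m → Fin V → ZMod (p ^ k),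
                    ∑ i, c i * ρ (σ i) t
                      = c i₀ * ρ (σ i₀) t + ∑ i ∈ univ.erase i₀, c i * ρ (σ i) t := by
                  intro ρ
                  exact (Finset.add_sum_erase univ (fun i => c i * ρ (σ i) t)
                    (mem_univ i₀)).symm
                have herased : ∑ i ∈ univ.erase i₀, c i * ω (σ i) t
                    = ∑ i ∈ univ.erase i₀, c i * ω' (σ i) t := by
                  apply Finset.sum_congr rfl
                  intro i hi
                  have hne : σ i ≠ σ i₀ :=
                    fun h => (Finset.mem_erase.mp hi).1 (hσ h)
                  have := congrFun hres ⟨σ i, hne⟩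
                  simp only at this
                  rw [this]
                have hcc : c i₀ * ω (σ i₀) t = c i₀ * ω' (σ i₀) t := by
                  have e1 := hsplit ω
                  have e2 := hsplit ω'
                  rw [h0] at e1
                  rw [h0'] at e2
                  rw [herased] at e1
                  exact add_right_cancel (e1.symm.trans e2)
                exact hu.mul_left_cancel hcc
              · have := congrFun hres ⟨j, hj⟩
                simpa using this
          calc (univ.filter (fun ω : Fin m → Fin V → ZMod (p ^ k) => Φ ω = 0)).card
              ≤ Fintype.card ({j : Fin m // j ≠ σ i₀} → (Fin V → ZMod (p ^ k))) := this
            _ = ((p ^ k) ^ V) ^ (m - 1) := by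
                rw [Fintype.card_fun, Fintype.card_fun, ZMod.card, Fintype.card_fin]
                congr 1
                rw [Fintype.card_subtype_compl, Fintype.card_subtype_eq, Fintype.card_fin]
end badsets


section existsgood

variable (hp : p.Prime) (hk : 1 ≤ k)
include hp hk

lemma badB_bound [NeZero (p ^ k)] (V m n : ℕ) :
    (univ.filter (fun ω : Fin m → Fin V → ZMod (p ^ k) => ¬ GoodB V m n ω)).card
      ≤ m ^ n * ((p ^ k) ^ n * ((p ^ (k - 1)) ^ V * ((p ^ k) ^ V) ^ (m - 1))) := by
  classical
  set Bσc : (Fin n → Fin m) → (Fin n → ZMod (p ^ k)) →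
      Finset (Fin m → Fin V → ZMod (p ^ k)) :=
    fun σ c => univ.filter (fun ω =>
      (∃ i₀, c i₀ ∉ Ip p k) ∧ ∀ t, (∑ i, c i * ω (σ i) t) ∈ Ip p k) with hBσc
  have hsub : (univ.filter (fun ω : Fin m → Fin V → ZMod (p ^ k) => ¬ GoodB V m n ω))
      ⊆ (univ.filter (fun σ : Fin n → Fin m => Function.Injective σ)).biUnion
          (fun σ => (univ : Finset (Fin n → ZMod (p ^ k))).biUnion (fun c => Bσc σ c)) := by
    intro ω hω
    have hbad := (mem_filter.mp hω).2
    rw [GoodB] at hbad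
    push_neg at hbad
    obtain ⟨σ, hσinj, hnind⟩ := hbad
    rw [IND] at hnind
    push_neg at hnind
    obtain ⟨c, hcsum, i₀, hi₀⟩ := hnind
    refine Finset.mem_biUnion.mpr ⟨σ, mem_filter.mpr ⟨mem_univ σ, hσinj⟩, ?_⟩
    refine Finset.mem_biUnion.mpr ⟨c, mem_univ c, ?_⟩
    rw [hBσc]
    exact mem_filter.mpr ⟨mem_univ ω, ⟨i₀, hi₀⟩, hcsum⟩
  have hperpair : ∀ σ ∈ (univ.filter (fun σ : Fin n → Fin m => Function.Injective σ)),
      ∀ c : Fin n → ZMod (p ^ k),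
      (Bσc σ c).card ≤ (p ^ (k - 1)) ^ V * ((p ^ k) ^ V) ^ (m - 1) := by
    intro σ hσ c
    have hσinj : Function.Injective σ := (mem_filter.mp hσ).2
    by_cases hex : ∃ i₀, c i₀ ∉ Ip p k
    · obtain ⟨i₀, hi₀⟩ := hex
      calc (Bσc σ c).card
          ≤ (univ.filter (fun ω : Fin m → Fin V → ZMod (p ^ k) =>
              ∀ t, (∑ i, c i * ω (σ i) t) ∈ Ip p k)).card := by
            apply Finset.card_le_card
            intro ω hω
            rw [hBσc] at hω
            exact mem_filter.mpr ⟨mem_univ ω, (mem_filter.mp hω).2.2⟩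
        _ ≤ (p ^ (k - 1)) ^ V * ((p ^ k) ^ V) ^ (m - 1) :=
            badB_pair_bound hp hk V m n σ hσinj c i₀ hi₀
    · have : Bσc σ c = ∅ := by
        rw [hBσc]
        apply Finset.filter_false_of_mem
        intro ω _
        rintro ⟨hex', _⟩
        exact hex hex'
      rw [this]
      simp
  calc (univ.filter (fun ω : Fin m → Fin V → ZMod (p ^ k) => ¬ GoodB V m n ω)).card
      ≤ ((univ.filter (fun σ : Fin n → Fin m => Function.Injective σ)).biUnion
          (fun σ => (univ : Finset (Fin n → ZMod (p ^ k))).biUnion (fun c => Bσc σ c))).card :=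
        Finset.card_le_card hsub
    _ ≤ ∑ σ ∈ (univ.filter (fun σ : Fin n → Fin m => Function.Injective σ)),
          ((univ : Finset (Fin n → ZMod (p ^ k))).biUnion (fun c => Bσc σ c)).card :=
        Finset.card_biUnion_le
    _ ≤ ∑ σ ∈ (univ.filter (fun σ : Fin n → Fin m => Function.Injective σ)),
          ((p ^ k) ^ n * ((p ^ (k - 1)) ^ V * ((p ^ k) ^ V) ^ (m - 1))) := by
        apply Finset.sum_le_sum
        intro σ hσ
        calc ((univ : Finset (Fin n → ZMod (p ^ k))).biUnion (fun c => Bσc σ c)).card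
            ≤ ∑ c : Fin n → ZMod (p ^ k), (Bσc σ c).card := Finset.card_biUnion_le
          _ ≤ ∑ _c : Fin n → ZMod (p ^ k),
                ((p ^ (k - 1)) ^ V * ((p ^ k) ^ V) ^ (m - 1)) :=
              Finset.sum_le_sum (fun c _ => hperpair σ hσ c)
          _ = (p ^ k) ^ n * ((p ^ (k - 1)) ^ V * ((p ^ k) ^ V) ^ (m - 1)) := by
              rw [Finset.sum_const, smul_eq_mul, Finset.card_univ, Fintype.card_fun,
                ZMod.card, Fintype.card_fin]
    _ ≤ m ^ n * ((p ^ k) ^ n * ((p ^ (k - 1)) ^ V * ((p ^ k) ^ V) ^ (m - 1))) := by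
        rw [Finset.sum_const, smul_eq_mul]
        apply Nat.mul_le_mul_right
        calc (univ.filter (fun σ : Fin n → Fin m => Function.Injective σ)).card
            ≤ (univ : Finset (Fin n → Fin m)).card := Finset.card_filter_le _ _
          _ = m ^ n := by rw [Finset.card_univ, Fintype.card_fun, Fintype.card_fin,
                Fintype.card_fin]

lemma exists_good (V m n : ℕ) (hV : 1 ≤ V) (hm : 1 ≤ m)
    (HA : 2 * ((p ^ k) ^ V * (p ^ k - 1) ^ m) < (p ^ k) ^ m)
    (HB : 2 * (m ^ n * (p ^ k) ^ n) < p ^ V) :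
    ∃ ω : Fin m → Fin V → ZMod (p ^ k), GoodA V m ω ∧ GoodB V m n ω := by
  classical
  haveI := neZeroQ hp hk
  set q := p ^ k with hq
  have hqpos : 0 < q := qpos hp hk
  set badA := univ.filter (fun ω : Fin m → Fin V → ZMod (p ^ k) => ¬ GoodA V m ω) with hbadA
  set badB := univ.filter (fun ω : Fin m → Fin V → ZMod (p ^ k) => ¬ GoodB V m n ω) with hbadB
  have hT : Fintype.card (Fin m → Fin V → ZMod (p ^ k)) = (q ^ V) ^ m := by
    rw [Fintype.card_fun, Fintype.card_fun, ZMod.card, Fintype.card_fin, Fintype.card_fin]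
  have h2A : 2 * badA.card < (q ^ V) ^ m := by
    have hA := badA_bound hp hk V m hV hm
    have hfac : (q ^ V) ^ m = q ^ m * (q ^ (V - 1)) ^ m := by
      rw [← mul_pow]
      congr 1
      rw [← pow_succ']
      congr 1
      omega
    have hlhs : 2 * ((q) ^ V * ((q - 1) * q ^ (V - 1)) ^ m)
        = (2 * (q ^ V * (q - 1) ^ m)) * (q ^ (V - 1)) ^ m := by
      rw [mul_pow]; ring
    calc 2 * badA.card ≤ 2 * ((q) ^ V * ((q - 1) * q ^ (V - 1)) ^ m) :=
          Nat.mul_le_mul_left 2 hA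
      _ = (2 * (q ^ V * (q - 1) ^ m)) * (q ^ (V - 1)) ^ m := hlhs
      _ < q ^ m * (q ^ (V - 1)) ^ m := by
          apply mul_lt_mul_of_pos_right HA
          exact Nat.pow_pos (Nat.pow_pos hqpos)
      _ = (q ^ V) ^ m := hfac.symm
  have h2B : 2 * badB.card < (q ^ V) ^ m := by
    have hB := badB_bound hp hk V m n
    have hsplitq : q = p ^ (k - 1) * p := by
      rw [hq, ← pow_succ]
      congr 1
      omega
    have hqv : q ^ V = (p ^ (k - 1)) ^ V * p ^ V := by
      rw [hsplitq, mul_pow]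
    have hfac : (q ^ V) ^ m = (p ^ V * (p ^ (k - 1)) ^ V) * ((q ^ V)) ^ (m - 1) := by
      calc (q ^ V) ^ m = q ^ V * (q ^ V) ^ (m - 1) := by
            rw [← pow_succ']
            congr 1
            omega
        _ = (p ^ V * (p ^ (k - 1)) ^ V) * ((q ^ V)) ^ (m - 1) := by
            rw [hqv]; ring
    have hlhs : 2 * (m ^ n * (q ^ n * ((p ^ (k - 1)) ^ V * ((q) ^ V) ^ (m - 1))))
        = (2 * (m ^ n * q ^ n)) * ((p ^ (k - 1)) ^ V * (q ^ V) ^ (m - 1)) := by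
      ring
    calc 2 * badB.card
        ≤ 2 * (m ^ n * (q ^ n * ((p ^ (k - 1)) ^ V * ((q) ^ V) ^ (m - 1)))) :=
          Nat.mul_le_mul_left 2 hB
      _ = (2 * (m ^ n * q ^ n)) * ((p ^ (k - 1)) ^ V * (q ^ V) ^ (m - 1)) := hlhs
      _ < p ^ V * ((p ^ (k - 1)) ^ V * (q ^ V) ^ (m - 1)) := by
          apply mul_lt_mul_of_pos_right HB
          apply Nat.mul_pos
          · exact Nat.pow_pos (Nat.pow_pos hp.pos)
          · exact Nat.pow_pos (Nat.pow_pos hqpos)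
      _ = (q ^ V) ^ m := by rw [hfac]; ring
  have hexists : ∃ ω : Fin m → Fin V → ZMod (p ^ k), ω ∉ badA ∪ badB := by
    by_contra hcon
    push_neg at hcon
    have huniv : (univ : Finset (Fin m → Fin V → ZMod (p ^ k))) ⊆ badA ∪ badB :=
      fun ω _ => hcon ω
    have hcard : (q ^ V) ^ m ≤ (badA ∪ badB).card := by
      rw [← hT, ← Finset.card_univ]
      exact Finset.card_le_card huniv
    have := Finset.card_union_le badA badB
    omega
  obtain ⟨ω, hω⟩ := hexists
  rw [Finset.mem_union] at hω
  push_neg at hω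
  obtain ⟨h1, h2⟩ := hω
  rw [hbadA, mem_filter] at h1
  rw [hbadB, mem_filter] at h2
  push_neg at h1 h2
  exact ⟨ω, h1 (mem_univ ω), h2 (mem_univ ω)⟩

end existsgood


section numeric

lemma nat_bern (a : ℕ) (ha : 1 ≤ a) : 2 * a ^ (a + 1) ≤ (a + 1) ^ (a + 1) := by
  have key : ∀ j, a ^ j * (a + j) ≤ (a + 1) ^ j * a := by
    intro j
    induction j with
    | zero => simp
    | succ j IH =>
      calc a ^ (j + 1) * (a + (j + 1)) = a * (a ^ j * (a + j)) + a ^ (j + 1) := by ring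
        _ ≤ a * ((a + 1) ^ j * a) + a ^ (j + 1) := by
            have := Nat.mul_le_mul_left a IH
            omega
        _ ≤ a * ((a + 1) ^ j * a) + (a + 1) ^ j * a := by
            have : a ^ (j + 1) ≤ (a + 1) ^ j * a := by
              rw [pow_succ]
              exact Nat.mul_le_mul_right a (Nat.pow_le_pow_left (by omega) j)
            omega
        _ = (a + 1) ^ (j + 1) * a := by ring
  have h := key (a + 1)
  have h2 : (2 * a ^ (a + 1)) * a ≤ a ^ (a + 1) * (a + (a + 1)) := by
    have : 1 ≤ a ^ (a + 1) := Nat.one_le_pow _ _ ha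
    nlinarith
  have h3 : (2 * a ^ (a + 1)) * a ≤ ((a + 1) ^ (a + 1)) * a := h2.trans h
  exact Nat.le_of_mul_le_mul_right h3 ha

lemma HA_holds (hp : p.Prime) (hk : 1 ≤ k) (V t : ℕ) (hV : 1 ≤ V) (ht : p * k * V + 2 ≤ t) :
    2 * ((p ^ k) ^ V * (p ^ k - 1) ^ (p ^ k * t)) < (p ^ k) ^ (p ^ k * t) := by
  have hq2 : 2 ≤ p ^ k := q1lt hp hk
  set q := p ^ k with hqdef
  set a := q - 1 with hadef
  have haq : q = a + 1 := by omega
  have hbern : 2 * a ^ q ≤ q ^ q := by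
    rw [haq]
    exact nat_bern a (by omega)
  have hpowt : 2 ^ t * a ^ (q * t) ≤ q ^ (q * t) := by
    have h := Nat.pow_le_pow_left hbern t
    rw [mul_pow, ← pow_mul, ← pow_mul] at h
    calc 2 ^ t * a ^ (q * t) = 2 ^ t * a ^ (q * t) := rfl
      _ ≤ q ^ (q * t) := h
  have hq2t : 2 * q ^ V < 2 ^ t := by
    have hpk : q ^ V = p ^ (k * V) := by rw [hqdef, ← pow_mul]
    have hple : p ^ (k * V) ≤ 2 ^ (p * (k * V)) := by
      calc p ^ (k * V) ≤ (2 ^ p) ^ (k * V) :=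
            Nat.pow_le_pow_left (Nat.lt_two_pow_self (n := p)).le _
        _ = 2 ^ (p * (k * V)) := by rw [← pow_mul]
    have h4 : 2 * q ^ V ≤ 2 * 2 ^ (p * (k * V)) := by
      rw [hpk]
      omega
    have h5 : 2 * 2 ^ (p * (k * V)) < 2 ^ (p * k * V + 2) := by
      have : 2 ^ (p * k * V + 2) = 4 * 2 ^ (p * k * V) := by
        rw [pow_add]
        ring
      rw [this, mul_assoc]
      have hpos : 0 < 2 ^ (p * (k * V)) := Nat.pow_pos (by omega)
      omega
    have h6 : (2 : ℕ) ^ (p * k * V + 2) ≤ 2 ^ t := Nat.pow_le_pow_right (by omega) ht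
    omega
  have hapos : 0 < a ^ (q * t) := Nat.pow_pos (by omega)
  calc 2 * (q ^ V * a ^ (q * t)) = (2 * q ^ V) * a ^ (q * t) := by ring
    _ < 2 ^ t * a ^ (q * t) := by
        exact mul_lt_mul_of_pos_right hq2t hapos
    _ ≤ q ^ (q * t) := hpowt

lemma exists_bigV (n C : ℕ) (hC : 0 < C) :
    ∃ V₀, 1 ≤ V₀ ∧ ∀ V, V₀ ≤ V → C * (V + 1) ^ n < 2 ^ V := by
  have h := tendsto_pow_const_div_const_pow_of_one_lt n (by norm_num : (1 : ℝ) < 2)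
  have hlim : ∀ᶠ V : ℕ in Filter.atTop, ((V : ℝ) ^ n / 2 ^ V) < 1 / (C * 2 ^ n + 1) := by
    apply h.eventually_lt_const
    positivity
  obtain ⟨V₀, hV₀⟩ := Filter.eventually_atTop.mp hlim
  refine ⟨max V₀ 1, le_max_right _ _, fun V hV => ?_⟩
  have hV1 : 1 ≤ V := le_trans (le_max_right _ _) hV
  have hVV₀ : V₀ ≤ V := le_trans (le_max_left _ _) hV
  have hreal := hV₀ V hVV₀
  have hpos2 : (0 : ℝ) < 2 ^ V := by positivity
  have hposC : (0 : ℝ) < (C : ℝ) * 2 ^ n + 1 := by positivity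
  rw [div_lt_div_iff₀ hpos2 hposC, one_mul] at hreal
  -- hreal : (V:ℝ)^n * (C * 2^n + 1) < 2^V
  have hnatlt : ((C * 2 ^ n + 1) * V ^ n : ℕ) < (2 ^ V : ℕ) := by
    have : (((C * 2 ^ n + 1) * V ^ n : ℕ) : ℝ) < ((2 ^ V : ℕ) : ℝ) := by
      push_cast
      calc ((C : ℝ) * 2 ^ n + 1) * (V : ℝ) ^ n = (V : ℝ) ^ n * ((C : ℝ) * 2 ^ n + 1) := by ring
        _ < 2 ^ V := hreal
    exact_mod_cast this
  have hstep : C * (V + 1) ^ n ≤ C * (2 * V) ^ n := by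
    apply Nat.mul_le_mul_left
    apply Nat.pow_le_pow_left
    omega
  calc C * (V + 1) ^ n ≤ C * (2 * V) ^ n := hstep
    _ = C * 2 ^ n * V ^ n := by rw [mul_pow]; ring
    _ ≤ (C * 2 ^ n + 1) * V ^ n := by
        apply Nat.mul_le_mul_right
        omega
    _ < 2 ^ V := hnatlt

end numeric

end FunctionLemma

open FunctionLemma Finset in
/-- Function lemma: for any positive integers `k`, `n` and prime `p`, there exist a finite set
`S` and a subgroup `F` of the additive group of functions `S → ℤ/p^kℤ` such that every `f ∈ F`
vanishes at some point of `S`, but for any `s₁, …, sₙ ∈ S` there is `f ∈ F` taking value `1`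
at all of them. -/
theorem function_lemma (p : ℕ) (hp : p.Prime) (k n : ℕ) (hk : 1 ≤ k) (hn : 1 ≤ n) :
    ∃ (S : Type) (_ : Fintype S) (F : AddSubgroup (S → ZMod (p ^ k))),
      (∀ f ∈ F, ∃ s : S, f s = 0) ∧
      (∀ s : Fin n → S, ∃ f ∈ F, ∀ i : Fin n, f (s i) = 1) := by
  classical
  haveI := neZeroQ hp hk
  set q := p ^ k with hqdef
  have hq2 : 2 ≤ q := q1lt hp hk
  -- choose dimensions
  set C := 2 * (q * (p * k + 2)) ^ n * q ^ n with hCdef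
  have hCpos : 0 < C := by
    have h1 : 0 < q * (p * k + 2) := by positivity
    have h2 : 0 < (q * (p * k + 2)) ^ n := Nat.pow_pos h1
    have h3 : 0 < q ^ n := Nat.pow_pos (by omega)
    positivity
  obtain ⟨V₀, hV₀1, hV₀⟩ := exists_bigV n C hCpos
  set V := max V₀ n with hVdef
  have hV1 : 1 ≤ V := le_trans hV₀1 (le_max_left _ _)
  have hnV : n ≤ V := le_max_right _ _
  set t := p * k * V + 2 with htdef
  set m := q * t with hmdef
  have hm1 : 1 ≤ m := by
    have : 1 ≤ t := by omega
    calc 1 = 1 * 1 := by omega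
      _ ≤ q * t := Nat.mul_le_mul (by omega) this
  have hnm : n ≤ m := by
    have h1 : V ≤ t := by
      have : V ≤ p * k * V := by
        calc V = 1 * V := (one_mul V).symm
          _ ≤ (p * k) * V := Nat.mul_le_mul_right V (by
              have := hp.pos
              calc 1 = 1 * 1 := rfl
                _ ≤ p * k := Nat.mul_le_mul (by omega) hk)
      omega
    calc n ≤ V := hnV
      _ ≤ t := h1
      _ = 1 * t := (one_mul t).symm
      _ ≤ q * t := Nat.mul_le_mul_right t (by omega)
  -- numeric hypotheses
  have HA : 2 * (q ^ V * (q - 1) ^ m) < q ^ m := by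
    rw [hmdef, hqdef]
    exact HA_holds hp hk V t hV1 (le_of_eq htdef.symm)
  have HB : 2 * (m ^ n * q ^ n) < p ^ V := by
    have hmle : m ≤ q * (p * k + 2) * (V + 1) := by
      rw [hmdef, htdef]
      calc q * (p * k * V + 2) ≤ q * ((p * k + 2) * (V + 1)) := by
            apply Nat.mul_le_mul_left
            have : (p * k + 2) * (V + 1) = p * k * V + p * k + 2 * V + 2 := by ring
            omega
        _ = q * (p * k + 2) * (V + 1) := by ring
    have h1 : 2 * (m ^ n * q ^ n) ≤ C * (V + 1) ^ n := by
      calc 2 * (m ^ n * q ^ n) ≤ 2 * ((q * (p * k + 2) * (V + 1)) ^ n * q ^ n) := by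
            apply Nat.mul_le_mul_left
            apply Nat.mul_le_mul_right
            exact Nat.pow_le_pow_left hmle n
        _ = C * (V + 1) ^ n := by rw [hCdef, mul_pow]; ring
    have h2 : C * (V + 1) ^ n < 2 ^ V := hV₀ V (le_max_left _ _)
    have h3 : (2 : ℕ) ^ V ≤ p ^ V := Nat.pow_le_pow_left hp.two_le V
    omega
  -- get the good matrix
  obtain ⟨ω, hGA, hGB⟩ := exists_good hp hk V m n hV1 hm1 HA HB
  -- build the subgroup
  set D : (Fin V → ZMod (p ^ k)) →+ (Fin m → ZMod (p ^ k)) :=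
    AddMonoidHom.mk' (fun v => fun i => dotv (ω i) v) (fun a b => by
      funext i
      exact dotv_add_right (ω i) a b) with hDdef
  have hDapp : ∀ v i, D v i = dotv (ω i) v := fun v i => by
    rw [hDdef, AddMonoidHom.mk'_apply]
  refine ⟨Fin m, inferInstance, D.range, ?_, ?_⟩
  · -- every element of F has a zero
    rintro f hf
    obtain ⟨v, rfl⟩ := AddMonoidHom.mem_range.mp hf
    obtain ⟨i, hi⟩ := hGA v
    exact ⟨i, by rw [hDapp]; exact hi⟩
  · -- n-wise value 1
    intro s
    have hT₀ : (univ.image s).card ≤ n := by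
      calc (univ.image s).card ≤ (univ : Finset (Fin n)).card := Finset.card_image_le
        _ = n := by rw [Finset.card_univ, Fintype.card_fin]
    obtain ⟨T₁, hsub₁, hsub₂, hcard⟩ :=
      Finset.exists_subsuperset_card_eq (Finset.subset_univ (univ.image s)) hT₀
        (by rw [Finset.card_univ, Fintype.card_fin]; exact hnm)
    set σiso := T₁.orderIsoOfFin hcard with hσiso
    set σ : Fin n → Fin m := fun j => (σiso j : Fin m) with hσdef
    have hσinj : Function.Injective σ := by
      intro a b hab
      exact σiso.injective (Subtype.ext hab)
    have hind : IND (fun j => ω (σ j)) := hGB σ hσinj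
    obtain ⟨v, hv⟩ := solve hp hk (fun j => ω (σ j)) hind
    refine ⟨D v, AddMonoidHom.mem_range.mpr ⟨v, rfl⟩, ?_⟩
    intro i
    have hmem : s i ∈ T₁ := hsub₁ (Finset.mem_image_of_mem s (mem_univ i))
    obtain ⟨j, hj⟩ := σiso.surjective ⟨s i, hmem⟩
    have hsj : σ j = s i := by
      show ((σiso j : T₁) : Fin m) = s i
      rw [hj]
    rw [hDapp, ← hsj]
    exact hv j
end

section
/- Let p be prime, k, n, m positive integers with m > n(p−1)p^{k−1}(p^k − 1). Let S = ℤ_{p^k}^m \ p·ℤ_{p^k}^m and let F be the set of functions S → ℤ_{p^k} given by polynomials in m variables over ℤ_{p^k} with zero constant term and total degree at most n(p−1)p^{k−1}. Then every f ∈ F vanishes at some point of S. -/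
open Finset

section Comb
variable {m : ℕ}

/-- `h : Finset (Fin m) → R` is a combination of superset-indicators `S ↦ [T ⊆ S]`
with `#T ≤ D`. -/
def IsComb (R : Type*) [CommSemiring R] (D : ℕ) (h : Finset (Fin m) → R) : Prop :=
  ∃ a : Finset (Fin m) → R, (∀ T, D < T.card → a T = 0) ∧ ∀ S, h S = ∑ T ∈ S.powerset, a T

variable {R : Type*} [CommSemiring R] {D E : ℕ} {h h₁ h₂ : Finset (Fin m) → R}

theorem IsComb.congr (hh : ∀ S, h₁ S = h₂ S) (H : IsComb R D h₂) : IsComb R D h₁ := by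
  obtain ⟨a, ha, hs⟩ := H
  exact ⟨a, ha, fun S => (hh S).trans (hs S)⟩

theorem IsComb.mono (hDE : D ≤ E) (H : IsComb R D h) : IsComb R E h := by
  obtain ⟨a, ha, hs⟩ := H
  exact ⟨a, fun T hT => ha T (lt_of_le_of_lt hDE hT), hs⟩

theorem IsComb.const (r : R) : IsComb R D (fun _ : Finset (Fin m) => r) := by
  refine ⟨fun T => if T = ∅ then r else 0, fun T hT => ?_, fun S => ?_⟩
  · dsimp only; rw [if_neg]; rintro rfl; simp at hT
  · dsimp only; rw [Finset.sum_ite_eq' S.powerset ∅ (fun _ => r), if_pos (Finset.empty_mem_powerset S)]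

theorem IsComb.indicator {T0 : Finset (Fin m)} (hT0 : T0.card ≤ D) (r : R) :
    IsComb R D (fun S => if T0 ⊆ S then r else 0) := by
  refine ⟨fun T => if T = T0 then r else 0, fun T hT => ?_, fun S => ?_⟩
  · dsimp only; rw [if_neg]; rintro rfl; omega
  · dsimp only; rw [Finset.sum_ite_eq' S.powerset T0 (fun _ => r)]
    by_cases hTS : T0 ⊆ S
    · rw [if_pos hTS, if_pos (Finset.mem_powerset.mpr hTS)]
    · rw [if_neg hTS, if_neg (fun hmem => hTS (Finset.mem_powerset.mp hmem))]

theorem IsComb.add (H1 : IsComb R D h₁) (H2 : IsComb R D h₂) :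
    IsComb R D (fun S => h₁ S + h₂ S) := by
  obtain ⟨a, ha, hsa⟩ := H1
  obtain ⟨b, hb, hsb⟩ := H2
  refine ⟨fun T => a T + b T, fun T hT => by dsimp only; rw [ha T hT, hb T hT, add_zero], fun S => ?_⟩
  dsimp only; rw [hsa, hsb, Finset.sum_add_distrib]

theorem IsComb.sum {ι : Type*} (J : Finset ι) (g : ι → Finset (Fin m) → R)
    (H : ∀ j ∈ J, IsComb R D (g j)) : IsComb R D (fun S => ∑ j ∈ J, g j S) := by
  classical
  induction J using Finset.induction_on with
  | empty => exact IsComb.congr (by simp) (IsComb.const 0)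
  | @insert j J hj ih =>
      refine IsComb.congr (fun S => Finset.sum_insert hj)
        ((H j (Finset.mem_insert_self j J)).add (ih (fun i hi => H i (Finset.mem_insert_of_mem hi))))

theorem IsComb.mul (H1 : IsComb R D h₁) (H2 : IsComb R E h₂) :
    IsComb R (D + E) (fun S => h₁ S * h₂ S) := by
  classical
  obtain ⟨a, ha, hsa⟩ := H1
  obtain ⟨b, hb, hsb⟩ := H2
  refine ⟨fun W => ∑ TU ∈ (W.powerset ×ˢ W.powerset).filter (fun TU => TU.1 ∪ TU.2 = W),
      a TU.1 * b TU.2, fun W hW => ?_, fun S => ?_⟩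
  · apply Finset.sum_eq_zero
    rintro ⟨T, U⟩ hTU
    simp only [Finset.mem_filter, Finset.mem_product, Finset.mem_powerset] at hTU
    have hcard : W.card ≤ T.card + U.card := hTU.2 ▸ Finset.card_union_le T U
    rcases (by omega : D < T.card ∨ E < U.card) with h | h
    · rw [ha T h, zero_mul]
    · rw [hb U h, mul_zero]
  · dsimp only
    rw [hsa, hsb, Finset.sum_mul_sum, ← Finset.sum_product']
    have hmaps : ∀ TU ∈ S.powerset ×ˢ S.powerset,
        (fun TU : Finset (Fin m) × Finset (Fin m) => TU.1 ∪ TU.2) TU ∈ S.powerset := by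
      rintro ⟨T, U⟩ hTU
      simp only [Finset.mem_product, Finset.mem_powerset] at hTU ⊢
      exact Finset.union_subset hTU.1 hTU.2
    rw [← Finset.sum_fiberwise_of_maps_to hmaps (fun TU => a TU.1 * b TU.2)]
    apply Finset.sum_congr rfl
    intro W hW
    apply Finset.sum_congr ?_ (fun _ _ => rfl)
    rw [Finset.mem_powerset] at hW
    ext ⟨T, U⟩
    simp only [Finset.mem_filter, Finset.mem_product, Finset.mem_powerset]
    constructor
    · rintro ⟨⟨h1, h2⟩, rfl⟩
      exact ⟨⟨Finset.subset_union_left, Finset.subset_union_right⟩, rfl⟩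
    · rintro ⟨⟨h1, h2⟩, rfl⟩
      exact ⟨⟨h1.trans hW, h2.trans hW⟩, rfl⟩

theorem IsComb.pow (H : IsComb R D h) : ∀ r : ℕ, IsComb R (D * r) (fun S => h S ^ r)
  | 0 => by simpa using (IsComb.const 1 : IsComb R 0 _).mono (Nat.zero_le _)
  | r + 1 => by
      have := ((IsComb.pow H r).mul H)
      rw [mul_comm D r] at this
      refine IsComb.congr (fun S => pow_succ (h S) r) ?_
      refine this.mono ?_
      rw [Nat.mul_succ, mul_comm r D]

theorem IsComb.prod {ι : Type*} (J : Finset ι) (g : ι → Finset (Fin m) → R) (Dg : ι → ℕ)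
    (H : ∀ j ∈ J, IsComb R (Dg j) (g j)) :
    IsComb R (∑ j ∈ J, Dg j) (fun S => ∏ j ∈ J, g j S) := by
  classical
  induction J using Finset.induction_on with
  | empty => simpa using (IsComb.const 1 : IsComb R 0 _)
  | @insert j J hj ih =>
      refine IsComb.congr (fun S => Finset.prod_insert hj) ?_
      have := (H j (Finset.mem_insert_self j J)).mul
        (ih (fun i hi => H i (Finset.mem_insert_of_mem hi)))
      rwa [← Finset.sum_insert hj] at this

theorem IsComb.natCast {h : Finset (Fin m) → ℕ} (H : IsComb ℕ D h) :
    IsComb R D (fun S => (h S : R)) := by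
  obtain ⟨a, ha, hs⟩ := H
  exact ⟨fun T => (a T : R), fun T hT => by dsimp only; rw [ha T hT, Nat.cast_zero],
    fun S => by dsimp only; rw [hs S, Nat.cast_sum]⟩
end Comb

section Part2
variable {m : ℕ}

theorem IsComb.sub {R : Type*} [CommRing R] {D : ℕ} {h₁ h₂ : Finset (Fin m) → R}
    (H1 : IsComb R D h₁) (H2 : IsComb R D h₂) : IsComb R D (fun S => h₁ S - h₂ S) := by
  obtain ⟨a, ha, hsa⟩ := H1
  obtain ⟨b, hb, hsb⟩ := H2
  refine ⟨fun T => a T - b T, fun T hT => by dsimp only; rw [ha T hT, hb T hT, sub_zero],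
    fun S => ?_⟩
  dsimp only
  rw [hsa, hsb, Finset.sum_sub_distrib]

theorem IsComb.alternating_sum_eq_zero {R : Type*} [CommRing R] {D : ℕ}
    {h : Finset (Fin m) → R} (H : IsComb R D h) (hD : D < m) :
    ∑ S ∈ (Finset.univ : Finset (Fin m)).powerset, (-1 : R) ^ S.card * h S = 0 := by
  classical
  obtain ⟨a, ha, hs⟩ := H
  have key : ∀ S : Finset (Fin m),
      h S = ∑ T ∈ (Finset.univ : Finset (Fin m)).powerset, if T ⊆ S then a T else 0 := by
    intro S
    rw [hs S, ← Finset.sum_filter]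
    apply Finset.sum_congr ?_ (fun _ _ => rfl)
    ext T
    simp [Finset.mem_powerset]
  calc ∑ S ∈ (Finset.univ : Finset (Fin m)).powerset, (-1 : R) ^ S.card * h S
      = ∑ S ∈ (Finset.univ : Finset (Fin m)).powerset,
          ∑ T ∈ (Finset.univ : Finset (Fin m)).powerset,
            (-1 : R) ^ S.card * (if T ⊆ S then a T else 0) := by
        apply Finset.sum_congr rfl
        intro S _
        rw [key S, Finset.mul_sum]
    _ = ∑ T ∈ (Finset.univ : Finset (Fin m)).powerset,
          ∑ S ∈ (Finset.univ : Finset (Fin m)).powerset,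
            (-1 : R) ^ S.card * (if T ⊆ S then a T else 0) := Finset.sum_comm
    _ = 0 := by
        apply Finset.sum_eq_zero
        intro T _
        by_cases haT : a T = 0
        · apply Finset.sum_eq_zero
          intro S _
          simp [haT]
        · have hTcard : T.card ≤ D := by
            by_contra hc
            exact haT (ha T (by omega))
          have hTne : T ≠ Finset.univ := by
            intro hT
            rw [hT, Finset.card_univ, Fintype.card_fin] at hTcard
            omega
          have hcompl : ((Finset.univ : Finset (Fin m)) \ T).Nonempty := by
            rw [Finset.sdiff_nonempty]
            intro hsub
            exact hTne (Finset.eq_univ_iff_forall.mpr fun i => hsub (Finset.mem_univ i))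
          calc ∑ S ∈ (Finset.univ : Finset (Fin m)).powerset,
                (-1 : R) ^ S.card * (if T ⊆ S then a T else 0)
              = ∑ S ∈ (Finset.univ : Finset (Fin m)).powerset.filter (fun S => T ⊆ S),
                  (-1 : R) ^ S.card * a T := by
                rw [Finset.sum_filter]
                apply Finset.sum_congr rfl
                intro S _
                by_cases hTS : T ⊆ S <;> simp [hTS]
            _ = ∑ U ∈ ((Finset.univ : Finset (Fin m)) \ T).powerset,
                  (-1 : R) ^ (T.card + U.card) * a T := by
                apply Finset.sum_nbij' (fun S => S \ T) (fun U => T ∪ U)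
                · intro S hS
                  simp only [Finset.mem_filter, Finset.mem_powerset] at hS ⊢
                  exact Finset.sdiff_subset_sdiff hS.1 (Finset.Subset.refl T)
                · intro U hU
                  simp only [Finset.mem_filter, Finset.mem_powerset] at hU ⊢
                  exact ⟨Finset.subset_univ _, Finset.subset_union_left⟩
                · intro S hS
                  simp only [Finset.mem_filter, Finset.mem_powerset] at hS
                  exact Finset.union_sdiff_of_subset hS.2
                · intro U hU
                  simp only [Finset.mem_powerset] at hU
                  have : Disjoint T U := by
                    apply Finset.disjoint_left.mpr
                    intro x hxT hxU
                    have := hU hxU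
                    simp only [Finset.mem_sdiff] at this
                    exact this.2 hxT
                  rw [Finset.union_sdiff_cancel_left this]
                · intro S hS
                  simp only [Finset.mem_filter, Finset.mem_powerset] at hS
                  congr 1
                  congr 1
                  rw [Finset.card_sdiff_of_subset hS.2]
                  have := Finset.card_le_card hS.2
                  omega
            _ = 0 := by
                have hzero : ∑ U ∈ ((Finset.univ : Finset (Fin m)) \ T).powerset,
                    (-1 : R) ^ U.card = 0 := by
                  have hint := Finset.sum_powerset_neg_one_pow_card_of_nonempty hcompl
                  have := congrArg (fun z : ℤ => (z : R)) hint
                  push_cast at this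
                  simpa using this
                calc _ = (-1 : R) ^ T.card * a T *
                      ∑ U ∈ ((Finset.univ : Finset (Fin m)) \ T).powerset, (-1 : R) ^ U.card := by
                      rw [Finset.mul_sum]
                      apply Finset.sum_congr rfl
                      intro U _
                      rw [pow_add]
                      ring
                  _ = 0 := by rw [hzero, mul_zero]
end Part2

section Part3
variable {m : ℕ}

theorem isComb_choose {ι : Type*} [DecidableEq ι] (d : ℕ) (I : Finset ι)
    (t : ι → Finset (Fin m)) (c : ι → ℕ) (ht : ∀ i ∈ I, (t i).card ≤ d) :
    ∀ r, 1 ≤ r →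
      IsComb ℕ (d * r) (fun S => (∑ i ∈ I.filter (fun i => t i ⊆ S), c i).choose r) := by
  classical
  induction I using Finset.induction_on with
  | empty =>
      intro r hr
      refine IsComb.congr (fun S => ?_) (IsComb.const 0)
      simp [Nat.choose_eq_zero_of_lt hr]
  | @insert i I hiI ih =>
      intro r hr
      have hd : (t i).card ≤ d := ht i (Finset.mem_insert_self i I)
      have ht' : ∀ j ∈ I, (t j).card ≤ d := fun j hj => ht j (Finset.mem_insert_of_mem hj)
      have hsum : ∀ S : Finset (Fin m),
          ∑ j ∈ (insert i I).filter (fun j => t j ⊆ S), c j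
            = (if t i ⊆ S then c i else 0) + ∑ j ∈ I.filter (fun j => t j ⊆ S), c j := by
        intro S
        rw [Finset.filter_insert]
        by_cases hiS : t i ⊆ S
        · rw [if_pos hiS, if_pos hiS, Finset.sum_insert (fun hmem => hiI (Finset.mem_of_mem_filter i hmem))]
        · rw [if_neg hiS, if_neg hiS, zero_add]
      refine IsComb.congr (fun S => ?_) (IsComb.sum (Finset.HasAntidiagonal.antidiagonal r)
        (fun ij S => ((if t i ⊆ S then c i else 0).choose ij.1)
          * ((∑ j ∈ I.filter (fun j => t j ⊆ S), c j).choose ij.2)) (fun ij hij => ?_))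
      · rw [hsum S, Nat.add_choose_eq]
      · obtain ⟨u, v⟩ := ij
        rw [Finset.HasAntidiagonal.mem_antidiagonal] at hij
        dsimp only at hij ⊢
        cases u with
        | zero =>
            have hv : v = r := by omega
            subst hv
            refine IsComb.congr (fun S => ?_) (ih ht' v hr)
            simp
        | succ u =>
            have hterm : ∀ S : Finset (Fin m),
                (if t i ⊆ S then c i else 0).choose (u + 1)
                  = if t i ⊆ S then (c i).choose (u + 1) else 0 := by
              intro S
              by_cases hiS : t i ⊆ S
              · rw [if_pos hiS, if_pos hiS]
              · rw [if_neg hiS, if_neg hiS, Nat.choose_eq_zero_of_lt (Nat.succ_pos u)]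
            cases v with
            | zero =>
                refine IsComb.congr (fun S => ?_) ((IsComb.indicator hd ((c i).choose (u+1))).mono
                  (Nat.le_mul_of_pos_right d hr))
                rw [hterm S, Nat.choose_zero_right, mul_one]
            | succ v =>
                have h2 : IsComb ℕ (d * (v + 1))
                    (fun S => (∑ j ∈ I.filter (fun j => t j ⊆ S), c j).choose (v + 1)) :=
                  ih ht' (v + 1) (Nat.succ_pos v)
                have h1 : IsComb ℕ d
                    (fun S => if t i ⊆ S then (c i).choose (u + 1) else 0) :=
                  IsComb.indicator hd _
                refine IsComb.congr (fun S => ?_) ((h1.mul h2).mono ?_)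
                · rw [hterm S]
                · have : d + d * (v + 1) = d * (v + 2) := by ring
                  rw [this]
                  exact Nat.mul_le_mul_left d (by omega)

theorem choose_pow_modEq (p : ℕ) (hp : p.Prime) :
    ∀ (j a : ℕ), (a.choose (p ^ j)) ≡ a / p ^ j [MOD p] := by
  haveI : Fact p.Prime := ⟨hp⟩
  intro j
  induction j with
  | zero => intro a; simp [Nat.ModEq.refl]
  | succ j ih =>
      intro a
      have h1 := Choose.choose_modEq_choose_mod_mul_choose_div_nat (p := p) (n := a)
        (k := p ^ (j + 1))
      have h2 : p ^ (j + 1) % p = 0 := by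
        rw [pow_succ, Nat.mul_mod_left]
      have h3 : p ^ (j + 1) / p = p ^ j := by
        rw [pow_succ, Nat.mul_div_cancel _ hp.pos]
      rw [h2, h3, Nat.choose_zero_right, one_mul] at h1
      refine h1.trans ((ih (a / p)).trans ?_)
      rw [Nat.div_div_eq_div_mul, ← pow_succ']

theorem pow_dvd_iff_digits (p : ℕ) (hp : 2 ≤ p) (a : ℕ) :
    ∀ k, (p ^ k ∣ a ↔ ∀ j < k, p ∣ a / p ^ j) := by
  intro k
  induction k with
  | zero => simp
  | succ k ih =>
      constructor
      · rintro ⟨b, rfl⟩ j hj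
        have hsplit : p ^ (k + 1) = p ^ j * p ^ (k + 1 - j) := by
          rw [← pow_add]
          congr 1
          omega
        rw [hsplit, mul_assoc, Nat.mul_div_cancel_left _ (pow_pos (by omega) j)]
        exact Dvd.dvd.mul_right (dvd_pow_self p (by omega)) b
      · intro h
        have hk : p ^ k ∣ a := ih.mpr fun j hj => h j (by omega)
        obtain ⟨b, rfl⟩ := hk
        have hb : p ∣ b := by
          have := h k (by omega)
          rwa [Nat.mul_div_cancel_left _ (pow_pos (by omega) k)] at this
        rw [pow_succ]
        exact mul_dvd_mul_left (p ^ k) hb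

theorem geom_nat (p : ℕ) (hp : 1 ≤ p) (k : ℕ) :
    ∑ j ∈ Finset.range k, p ^ j * (p - 1) = p ^ k - 1 := by
  have h1 : 1 ≤ p ^ k := Nat.one_le_pow _ _ (by omega)
  have key := geom_sum_mul (p : ℤ) k
  apply Nat.cast_inj (R := ℤ).mp
  push_cast [Nat.cast_sub hp, Nat.cast_sub h1]
  rw [← Finset.sum_mul]
  exact key
end Part3

/-- With `S = ℤ_{p^k}^m \ p·ℤ_{p^k}^m` and `m > n(p-1)p^{k-1}(p^k - 1)`, every polynomial in
`m` variables over `ℤ/p^kℤ` with zero constant term and total degree at most `n(p-1)p^{k-1}`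
vanishes at some point of `S`. -/
theorem polynomials_vanish_on_S (p : ℕ) (hp : p.Prime) (k n m : ℕ)
    (hk : 1 ≤ k) (hn : 1 ≤ n)
    (hm : m > n * (p - 1) * p ^ (k - 1) * (p ^ k - 1))
    (f : MvPolynomial (Fin m) (ZMod (p ^ k)))
    (hconst : f.coeff 0 = 0)
    (hdeg : f.totalDegree ≤ n * (p - 1) * p ^ (k - 1)) :
    ∃ v : Fin m → ZMod (p ^ k),
      (∃ i : Fin m, ¬ (p : ZMod (p ^ k)) ∣ v i) ∧ MvPolynomial.eval v f = 0 := by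
  classical
  haveI hfact : Fact p.Prime := ⟨hp⟩
  have hp2 : 2 ≤ p := hp.two_le
  haveI : NeZero (p ^ k) := ⟨pow_ne_zero _ (by omega)⟩
  set D0 := n * (p - 1) * p ^ (k - 1) with hD0
  set G : Finset (Fin m) → ℕ := fun S =>
    ∑ α ∈ f.support.filter (fun α => α.support ⊆ S), (f.coeff α).val with hGdef
  have hcard : ∀ α ∈ f.support, (α.support).card ≤ D0 := by
    intro α hα
    have h1 : α.support.card ≤ α.sum fun _ e => e := by
      rw [Finsupp.sum, Finset.card_eq_sum_ones]
      exact Finset.sum_le_sum fun i hi =>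
        Nat.one_le_iff_ne_zero.mpr (Finsupp.mem_support_iff.mp hi)
    exact h1.trans ((MvPolynomial.le_totalDegree hα).trans hdeg)
  have key : ∃ S : Finset (Fin m), S.Nonempty ∧ p ^ k ∣ G S := by
    by_contra hcon
    push_neg at hcon
    set Ind : Finset (Fin m) → ZMod p := fun S =>
      ∏ j ∈ Finset.range k, (1 - ((G S).choose (p ^ j) : ZMod p) ^ (p - 1)) with hInd
    have hIndComb : IsComb (ZMod p) (D0 * (p ^ k - 1)) Ind := by
      have hfac : ∀ j ∈ Finset.range k, IsComb (ZMod p) (D0 * p ^ j * (p - 1))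
          (fun S => 1 - ((G S).choose (p ^ j) : ZMod p) ^ (p - 1)) := by
        intro j _
        have h1 : IsComb ℕ (D0 * p ^ j) (fun S => (G S).choose (p ^ j)) :=
          isComb_choose D0 f.support (fun α => α.support) (fun α => (f.coeff α).val)
            hcard (p ^ j) (Nat.one_le_pow _ _ (by omega))
        have h3 := (h1.natCast (R := ZMod p)).pow (p - 1)
        exact (IsComb.const 1).sub h3
      have := IsComb.prod (Finset.range k)
        (fun j S => 1 - ((G S).choose (p ^ j) : ZMod p) ^ (p - 1))
        (fun j => D0 * p ^ j * (p - 1)) hfac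
      refine this.mono (le_of_eq ?_)
      calc ∑ j ∈ Finset.range k, D0 * p ^ j * (p - 1)
          = D0 * ∑ j ∈ Finset.range k, p ^ j * (p - 1) := by
            rw [Finset.mul_sum]; apply Finset.sum_congr rfl; intros; ring
        _ = D0 * (p ^ k - 1) := by rw [geom_nat p (by omega) k]
    have hDlt : D0 * (p ^ k - 1) < m := hm
    have hvanish := hIndComb.alternating_sum_eq_zero hDlt
    have hG0 : G ∅ = 0 := by
      have hfe : f.support.filter (fun α => α.support ⊆ (∅ : Finset (Fin m))) = ∅ := by
        rw [Finset.filter_eq_empty_iff]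
        intro α hα hsub
        have hα0 : α = 0 := by
          apply Finsupp.support_eq_empty.mp
          exact Finset.subset_empty.mp hsub
        rw [hα0] at hα
        exact (MvPolynomial.mem_support_iff.mp hα) hconst
      rw [hGdef]
      dsimp only
      rw [hfe, Finset.sum_empty]
    have hInd0 : Ind ∅ = 1 := by
      rw [hInd]
      dsimp only
      apply Finset.prod_eq_one
      intro j _
      rw [hG0, Nat.choose_eq_zero_of_lt (pow_pos (by omega) j), Nat.cast_zero,
        zero_pow (by omega : p - 1 ≠ 0), sub_zero]
    have hIndS : ∀ S ∈ (Finset.univ : Finset (Fin m)).powerset, S ≠ ∅ →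
        (-1 : ZMod p) ^ S.card * Ind S = 0 := by
      intro S _ hSne
      have hnd : ¬ p ^ k ∣ G S := hcon S (Finset.nonempty_iff_ne_empty.mpr hSne)
      obtain ⟨j, hjk, hjnd⟩ : ∃ j, j < k ∧ ¬ p ∣ G S / p ^ j := by
        by_contra hc
        push_neg at hc
        exact hnd ((pow_dvd_iff_digits p hp2 (G S) k).mpr hc)
      have hch : ¬ p ∣ (G S).choose (p ^ j) := by
        intro hd
        have hmod := choose_pow_modEq p hp j (G S)
        have h0 : (G S).choose (p ^ j) ≡ 0 [MOD p] := (Nat.modEq_zero_iff_dvd).mpr hd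
        exact hjnd (Nat.modEq_zero_iff_dvd.mp ((h0.symm.trans hmod).symm))
      have hne : ((G S).choose (p ^ j) : ZMod p) ≠ 0 := by
        rw [Ne, ZMod.natCast_eq_zero_iff]
        exact hch
      have hfac0 : (1 - ((G S).choose (p ^ j) : ZMod p) ^ (p - 1)) = 0 := by
        rw [ZMod.pow_card_sub_one_eq_one hne, sub_self]
      rw [hInd]
      dsimp only
      rw [Finset.prod_eq_zero (Finset.mem_range.mpr hjk) hfac0, mul_zero]
    have hone : ∑ S ∈ (Finset.univ : Finset (Fin m)).powerset,
        (-1 : ZMod p) ^ S.card * Ind S = 1 := by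
      rw [Finset.sum_eq_single ∅ hIndS
        (fun h => absurd (Finset.empty_mem_powerset _) h)]
      rw [hInd0]
      simp
    rw [hvanish] at hone
    exact zero_ne_one hone
  obtain ⟨S, hSne, hdvd⟩ := key
  refine ⟨fun i => if i ∈ S then 1 else 0, ?_, ?_⟩
  · obtain ⟨i, hi⟩ := hSne
    refine ⟨i, ?_⟩
    dsimp only
    rw [if_pos hi]
    rintro ⟨c, hc⟩
    have hunit : IsUnit ((p : ℕ) : ZMod (p ^ k)) := IsUnit.of_mul_eq_one c hc.symm
    rw [ZMod.isUnit_iff_coprime] at hunit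
    have hpd : p ∣ Nat.gcd p (p ^ k) := Nat.dvd_gcd dvd_rfl (dvd_pow_self p (by omega))
    rw [Nat.Coprime] at hunit
    rw [hunit] at hpd
    have := Nat.le_of_dvd one_pos hpd
    omega
  · rw [MvPolynomial.eval_eq']
    have heval : ∀ α : Fin m →₀ ℕ,
        (∏ i : Fin m, (if i ∈ S then (1 : ZMod (p ^ k)) else 0) ^ α i)
          = if α.support ⊆ S then 1 else 0 := by
      intro α
      by_cases hsub : α.support ⊆ S
      · rw [if_pos hsub]
        apply Finset.prod_eq_one
        intro i _
        by_cases hiS : i ∈ S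
        · rw [if_pos hiS, one_pow]
        · have hzero : α i = 0 :=
            Finsupp.notMem_support_iff.mp (fun hmem => hiS (hsub hmem))
          rw [hzero, pow_zero]
      · rw [if_neg hsub]
        obtain ⟨i, hisup, hiS⟩ := Finset.not_subset.mp hsub
        apply Finset.prod_eq_zero (Finset.mem_univ i)
        rw [if_neg hiS, zero_pow (Finsupp.mem_support_iff.mp hisup)]
    calc ∑ α ∈ f.support, f.coeff α * ∏ i : Fin m, (if i ∈ S then (1 : ZMod (p ^ k)) else 0) ^ α i
        = ∑ α ∈ f.support, (if α.support ⊆ S then f.coeff α else 0) := by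
          apply Finset.sum_congr rfl
          intro α _
          rw [heval α]
          by_cases hsub : α.support ⊆ S <;> simp [hsub]
      _ = ∑ α ∈ f.support.filter (fun α => α.support ⊆ S), f.coeff α := by
          rw [Finset.sum_filter]
      _ = ((G S : ℕ) : ZMod (p ^ k)) := by
          rw [hGdef]
          dsimp only
          rw [Nat.cast_sum]
          apply Finset.sum_congr rfl
          intro α _
          rw [ZMod.natCast_zmod_val]
      _ = 0 := (ZMod.natCast_eq_zero_iff _ _).mpr hdvd
end

section
/- (Schanuel) Let p be prime, k ≥ 1, and f ∈ (ℤ/p^kℤ)[x₁,…,x_m] a polynomial with zero constant term. If m > (p^k − 1)·deg f, then f has a root in {0,1}^m different from the zero vector. -/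
open Finset MvPolynomial

/-- Counting lemma: the `r`-th elementary symmetric function of a family of 0-1 elements
equals the binomial coefficient `(number of ones).choose r`. -/
lemma schanuel_count {I : Type*} [Fintype I] [DecidableEq I] {R : Type*} [CommRing R] [DecidableEq R]
    (t : I → R) (h : ∀ a, t a = 0 ∨ t a = 1) (r : ℕ) :
    ∑ A ∈ Finset.powersetCard r (Finset.univ : Finset I), ∏ a ∈ A, t a
      = (((Finset.univ.filter fun a => t a = 1)).card.choose r : R) := by
  set S := Finset.univ.filter fun a => t a = 1 with hS
  have key : ∀ A : Finset I, (∏ a ∈ A, t a) = if A ⊆ S then 1 else 0 := by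
    intro A
    split_ifs with hA
    · refine Finset.prod_eq_one fun a ha => ?_
      have := hA ha
      rw [hS, Finset.mem_filter] at this
      exact this.2
    · rw [Finset.not_subset] at hA
      obtain ⟨a, haA, haS⟩ := hA
      have ht : t a = 0 := by
        rcases h a with h0 | h1
        · exact h0
        · exact absurd (Finset.mem_filter.mpr ⟨Finset.mem_univ a, h1⟩) haS
      exact Finset.prod_eq_zero haA ht
  rw [Finset.sum_congr rfl fun A _ => key A, Finset.sum_boole]
  congr 1
  rw [← Finset.card_powersetCard]
  congr 1
  ext A
  simp only [Finset.mem_filter, Finset.mem_powersetCard, Finset.subset_univ, true_and,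
    Finset.mem_powersetCard]
  tauto

/-- If `p` divides `n.choose (p ^ j)` for all `j < k`, then `p ^ k ∣ n`.
This follows from Lucas' theorem: `n.choose (p ^ j)` is congruent mod `p` to the `j`-th
base-`p` digit of `n`. -/
lemma schanuel_digits (p : ℕ) (hp : p.Prime) :
    ∀ (k n : ℕ), (∀ j < k, p ∣ Nat.choose n (p ^ j)) → p ^ k ∣ n := by
  haveI : Fact p.Prime := ⟨hp⟩
  intro k
  induction k with
  | zero => exact fun n _ => by simp
  | succ k ih =>
    intro n h
    have h0 : p ∣ n := by
      have := h 0 (Nat.succ_pos _)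
      simp only [pow_zero, Nat.choose_one_right] at this
      exact this
    have h1 : ∀ j < k, p ∣ Nat.choose (n / p) (p ^ j) := by
      intro j hj
      have hl : Nat.choose n (p ^ (j + 1)) ≡
          Nat.choose (n % p) (p ^ (j + 1) % p) * Nat.choose (n / p) (p ^ (j + 1) / p) [MOD p] :=
        Choose.choose_modEq_choose_mod_mul_choose_div_nat
      have hmod : p ^ (j + 1) % p = 0 := by
        rw [pow_succ]; exact Nat.mul_mod_left _ _
      have hdiv : p ^ (j + 1) / p = p ^ j := by
        rw [pow_succ]; exact Nat.mul_div_cancel _ hp.pos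
      rw [hmod, hdiv, Nat.choose_zero_right, one_mul] at hl
      have hz : Nat.choose n (p ^ (j + 1)) ≡ 0 [MOD p] :=
        (Nat.modEq_zero_iff_dvd).mpr (h (j + 1) (by omega))
      exact (Nat.modEq_zero_iff_dvd).mp (hl.symm.trans hz)
    have h2 := ih (n / p) h1
    have h3 : p ^ (k + 1) ∣ p * (n / p) := by
      rw [pow_succ, mul_comm]
      exact Nat.mul_dvd_mul_left p h2
    rwa [Nat.mul_div_cancel' h0] at h3

/-- The index type for the "bits" of `f`: each monomial `s` of `f` is repeated
`(f.coeff s).val` times. -/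
abbrev SchanuelIdx {m : ℕ} {R : Type*} [CommSemiring R] (f : MvPolynomial (Fin m) R)
    (val : R → ℕ) : Type _ :=
  Σ s : {s // s ∈ f.support}, Fin (val (f.coeff s.1))

/-- Geometric sum identity in `ℕ`. -/
lemma schanuel_geom (p d : ℕ) (hp : 1 ≤ p) :
    ∀ K : ℕ, ∑ j ∈ Finset.range K, p ^ j * ((p - 1) * d) = (p ^ K - 1) * d := by
  intro K
  induction K with
  | zero => simp
  | succ K ih =>
    rw [Finset.sum_range_succ, ih]
    have h1 : 1 ≤ p ^ K := Nat.one_le_pow _ _ hp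
    have key : p ^ K - 1 + p ^ K * (p - 1) = p ^ K * p - 1 := by
      have hms : p ^ K * (p - 1) = p ^ K * p - p ^ K := by
        rw [Nat.mul_sub, mul_one]
      have hle : p ^ K ≤ p ^ K * p := Nat.le_mul_of_pos_right _ hp
      omega
    calc (p ^ K - 1) * d + p ^ K * ((p - 1) * d)
        = (p ^ K - 1 + p ^ K * (p - 1)) * d := by ring
      _ = (p ^ (K + 1) - 1) * d := by rw [key, ← pow_succ]

/-- Schanuel's theorem: a polynomial over `ℤ/p^kℤ` in `m` variables with zero constant term,
where `m > (p^k - 1) · deg f`, has a root in `{0,1}^m` different from the zero vector. -/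
theorem schanuel (p : ℕ) (hp : p.Prime) (k : ℕ) (hk : 1 ≤ k) (m : ℕ)
    (f : MvPolynomial (Fin m) (ZMod (p ^ k)))
    (hconst : f.coeff 0 = 0)
    (hm : m > (p ^ k - 1) * f.totalDegree) :
    ∃ v : Fin m → ZMod (p ^ k),
      (∀ i, v i = 0 ∨ v i = 1) ∧ v ≠ 0 ∧ MvPolynomial.eval v f = 0 := by
  haveI : Fact p.Prime := ⟨hp⟩
  haveI : Fact (1 < p) := ⟨hp.one_lt⟩
  haveI : NeZero p := ⟨hp.pos.ne'⟩
  have hpk : 1 < p ^ k := by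
    calc 1 < p := hp.one_lt
      _ ≤ p ^ k := Nat.le_self_pow (by omega) p
  haveI : Fact (1 < p ^ k) := ⟨hpk⟩
  haveI : NeZero (p ^ k) := ⟨by positivity⟩
  set d := f.totalDegree with hd
  -- the bit polynomials
  set B : (Fin m →₀ ℕ) → MvPolynomial (Fin m) (ZMod p) :=
    fun s => ∏ i ∈ s.support, (X i) ^ (p - 1) with hB
  -- evaluation of a bit polynomial
  have hBval : ∀ (y : Fin m → ZMod p) (s : Fin m →₀ ℕ),
      eval y (B s) = if ∀ i ∈ s.support, y i ≠ 0 then 1 else 0 := by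
    intro y s
    rw [hB]
    simp only [map_prod, map_pow, eval_X]
    split_ifs with hall
    · exact Finset.prod_eq_one fun i hi => ZMod.pow_card_sub_one_eq_one (hall i hi)
    · push_neg at hall
      obtain ⟨i, hi, hyi⟩ := hall
      refine Finset.prod_eq_zero hi ?_
      rw [hyi, zero_pow]
      exact Nat.sub_ne_zero_of_lt hp.one_lt
  -- the index type of bits
  set I := SchanuelIdx f ZMod.val with hI
  -- the digit polynomials
  set G : ℕ → MvPolynomial (Fin m) (ZMod p) :=
    fun j => ∑ A ∈ Finset.powersetCard (p ^ j) (Finset.univ : Finset I),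
      ∏ a ∈ A, B a.1.1 with hG
  -- the number of bits equal to 1
  set N : (Fin m → ZMod p) → ℕ :=
    fun y => (Finset.univ.filter fun a : I => eval y (B a.1.1) = 1).card with hN
  -- key evaluation of the digit polynomials
  have hGval : ∀ (y : Fin m → ZMod p) (j : ℕ),
      eval y (G j) = ((N y).choose (p ^ j) : ZMod p) := by
    intro y j
    have ht : ∀ a : I, eval y (B a.1.1) = 0 ∨ eval y (B a.1.1) = 1 := by
      intro a; rw [hBval]; split_ifs
      exacts [Or.inr rfl, Or.inl rfl]
    have hc := schanuel_count (fun a : I => eval y (B a.1.1)) ht (p ^ j)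
    rw [hG]
    simp only [map_sum, map_prod]
    exact hc
  -- degree bound for the bit polynomials
  have hdegB : ∀ s ∈ f.support, (B s).totalDegree ≤ (p - 1) * d := by
    intro s hs
    refine (totalDegree_finset_prod _ _).trans ?_
    have h2 : ∀ i : Fin m, ((X i : MvPolynomial (Fin m) (ZMod p)) ^ (p - 1)).totalDegree
        ≤ p - 1 := by
      intro i
      refine (totalDegree_pow _ _).trans ?_
      rw [totalDegree_X, mul_one]
    have h3 : s.support.card ≤ d := by
      have hcs : s.support.card ≤ s.sum fun _ e => e := by
        rw [Finsupp.sum]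
        calc s.support.card = ∑ _i ∈ s.support, 1 := by simp
          _ ≤ ∑ i ∈ s.support, s i :=
            Finset.sum_le_sum fun i hi =>
              Nat.one_le_iff_ne_zero.mpr (Finsupp.mem_support_iff.mp hi)
      exact hcs.trans (le_totalDegree hs)
    calc ∑ i ∈ s.support, ((X i : MvPolynomial (Fin m) (ZMod p)) ^ (p - 1)).totalDegree
        ≤ ∑ _i ∈ s.support, (p - 1) := Finset.sum_le_sum fun i _ => h2 i
      _ = s.support.card * (p - 1) := by rw [Finset.sum_const, smul_eq_mul]
      _ ≤ d * (p - 1) := Nat.mul_le_mul_right _ h3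
      _ = (p - 1) * d := mul_comm _ _
  -- degree bound for the digit polynomials
  have hdegG : ∀ j, (G j).totalDegree ≤ p ^ j * ((p - 1) * d) := by
    intro j
    rw [hG]
    refine (totalDegree_finset_sum _ _).trans ?_
    refine Finset.sup_le fun A hA => ?_
    refine (totalDegree_finset_prod _ _).trans ?_
    have hcard : A.card = p ^ j := (Finset.mem_powersetCard.mp hA).2
    calc ∑ a ∈ A, (B a.1.1).totalDegree ≤ ∑ _a ∈ A, (p - 1) * d :=
        Finset.sum_le_sum fun a _ => hdegB a.1.1 a.1.2
      _ = A.card * ((p - 1) * d) := by rw [Finset.sum_const, smul_eq_mul]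
      _ = p ^ j * ((p - 1) * d) := by rw [hcard]
  -- Chevalley–Warning
  have hsum : (∑ j ∈ Finset.range k, (G j).totalDegree) < Fintype.card (Fin m) := by
    rw [Fintype.card_fin]
    calc ∑ j ∈ Finset.range k, (G j).totalDegree
        ≤ ∑ j ∈ Finset.range k, p ^ j * ((p - 1) * d) :=
          Finset.sum_le_sum fun j _ => hdegG j
      _ = (p ^ k - 1) * d := schanuel_geom p d hp.pos k
      _ < m := hm
  have hCW : p ∣ Fintype.card {x : Fin m → ZMod p // ∀ j ∈ Finset.range k, eval x (G j) = 0} :=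
    char_dvd_card_solutions_of_sum_lt p hsum
  -- zero is a solution
  have hzero : ∀ j ∈ Finset.range k, eval (0 : Fin m → ZMod p) (G j) = 0 := by
    intro j _
    rw [hGval]
    have hN0 : N 0 = 0 := by
      simp only [hN]
      rw [Finset.card_eq_zero, Finset.filter_eq_empty_iff]
      intro a _
      rw [hBval, if_neg]
      · exact zero_ne_one
      · intro hall
        have hne : a.1.1 ≠ 0 := by
          intro h0
          have := a.1.2
          rw [h0, MvPolynomial.mem_support_iff] at this
          exact this hconst
        obtain ⟨i, hi⟩ := Finsupp.support_nonempty_iff.mpr hne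
        exact hall i hi rfl
    rw [hN0, Nat.choose_eq_zero_of_lt (pow_pos hp.pos j)]
    simp
  -- there is a nontrivial solution
  have hpos : 0 < Fintype.card {x : Fin m → ZMod p // ∀ j ∈ Finset.range k, eval x (G j) = 0} :=
    Fintype.card_pos_iff.mpr ⟨⟨0, hzero⟩⟩
  have h2le : 1 < Fintype.card {x : Fin m → ZMod p // ∀ j ∈ Finset.range k, eval x (G j) = 0} :=
    lt_of_lt_of_le hp.one_lt (Nat.le_of_dvd hpos hCW)
  obtain ⟨⟨y, hy⟩, hyne⟩ := Fintype.exists_ne_of_one_lt_card h2le ⟨0, hzero⟩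
  have hy0 : y ≠ 0 := fun h => hyne (Subtype.ext h)
  -- define the 0-1 vector v
  set v : Fin m → ZMod (p ^ k) := fun i => if y i = 0 then 0 else 1 with hv
  refine ⟨v, ?_, ?_, ?_⟩
  · intro i
    by_cases h : y i = 0 <;> simp [hv, h]
  · obtain ⟨i, hi⟩ := Function.ne_iff.mp hy0
    intro hveq
    have := congrFun hveq i
    simp only [hv, Pi.zero_apply] at this
    rw [if_neg (by simpa using hi)] at this
    exact one_ne_zero this
  · -- eval v f = N y  as an element of ZMod (p^k)
    have hev : eval v f = ((N y : ℕ) : ZMod (p ^ k)) := by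
      rw [eval_eq]
      have hterm : ∀ s ∈ f.support, f.coeff s * ∏ i ∈ s.support, v i ^ s i
          = if ∀ i ∈ s.support, y i ≠ 0 then ((f.coeff s).val : ZMod (p ^ k)) else 0 := by
        intro s hs
        have hprod : (∏ i ∈ s.support, v i ^ s i)
            = if ∀ i ∈ s.support, y i ≠ 0 then 1 else 0 := by
          split_ifs with hall
          · refine Finset.prod_eq_one fun i hi => ?_
            rw [hv]
            simp only [if_neg (hall i hi), one_pow]
          · push_neg at hall
            obtain ⟨i, hi, hyi⟩ := hall
            refine Finset.prod_eq_zero hi ?_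
            rw [hv]
            simp only [if_pos hyi]
            rw [zero_pow (Finsupp.mem_support_iff.mp hi)]
        rw [hprod]
        split_ifs
        · rw [mul_one, ZMod.natCast_zmod_val]
        · rw [mul_zero]
      rw [Finset.sum_congr rfl hterm]
      -- compute N y as a sum over the support
      have hNy : N y = ∑ s ∈ f.support,
          if ∀ i ∈ s.support, y i ≠ 0 then (f.coeff s).val else 0 := by
        simp only [hN]
        rw [Finset.card_filter, ← Finset.univ_sigma_univ, Finset.sum_sigma]
        have hinner : ∀ x : {s // s ∈ f.support},
            (∑ _j : Fin ((f.coeff x.1).val),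
              if eval y (B x.1) = 1 then 1 else 0)
            = if ∀ i ∈ (x.1 : Fin m →₀ ℕ).support, y i ≠ 0 then (f.coeff x.1).val else 0 := by
          intro x
          rw [Finset.sum_const, Finset.card_univ, Fintype.card_fin, smul_eq_mul, hBval]
          by_cases hc : ∀ i ∈ (x.1 : Fin m →₀ ℕ).support, y i ≠ 0
          · simp [hc]
          · simp [hc]
        rw [Finset.sum_congr rfl fun x _ => hinner x]
        rw [Finset.univ_eq_attach, Finset.sum_attach f.support
          (fun s => if ∀ i ∈ s.support, y i ≠ 0 then (f.coeff s).val else 0)]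
      rw [hNy, Nat.cast_sum]
      refine Finset.sum_congr rfl fun s _ => ?_
      split_ifs <;> simp
    have hdvd : p ^ k ∣ N y := by
      apply schanuel_digits p hp
      intro j hj
      have hj' := hy j (Finset.mem_range.mpr hj)
      rw [hGval] at hj'
      exact (ZMod.natCast_eq_zero_iff _ _).mp hj'
    rw [hev]
    exact (ZMod.natCast_eq_zero_iff _ _).mpr hdvd
end

section
/- (Verbal-closedness lemma) Let H be a group, b ∈ H, p prime, k ≥ 1, with b^{p^k} ∈ Z(H). Let S be a finite set and F a subgroup of the group of functions S → ℤ/p^kℤ such that every f ∈ F vanishes at some s ∈ S. Form G = F ⋉ ∏_{s∈S} H_s, where each H_s is an isomorphic copy of H and f ∈ F acts by h_s^f = (h^{b^{f(s)}})_s. Then the diagonal subgroup {∏_{s∈S} h_s : h ∈ H} ≅ H is verbally closed in G. -/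
namespace VCAux

variable {A B : Type*} [AddCommGroup A] [AddCommGroup B]

/-- The "weighted exponent sum" functional associated to a word. -/
def wordSum (w : FreeGroup ℕ) : (ℕ → A) →+ A where
  toFun c := Multiplicative.toAdd (FreeGroup.lift (fun n => Multiplicative.ofAdd (c n)) w)
  map_zero' := by
    have h : (FreeGroup.lift (fun _ : ℕ => Multiplicative.ofAdd (0 : A)))
        = (1 : FreeGroup ℕ →* Multiplicative A) := by
      apply FreeGroup.ext_hom; intro a; simp
    simp only [Pi.zero_apply, h, MonoidHom.one_apply]
    simp
  map_add' c c' := by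
    have h : (FreeGroup.lift (fun n : ℕ => Multiplicative.ofAdd ((c + c') n)))
        = (FreeGroup.lift (fun n : ℕ => Multiplicative.ofAdd (c n))) *
          (FreeGroup.lift (fun n : ℕ => Multiplicative.ofAdd (c' n))) := by
      apply FreeGroup.ext_hom; intro a
      simp [ofAdd_add]
    simp only [h, MonoidHom.mul_apply]
    simp

lemma wordSum_apply (w : FreeGroup ℕ) (c : ℕ → A) :
    wordSum w c = Multiplicative.toAdd (FreeGroup.lift (fun n => Multiplicative.ofAdd (c n)) w) :=
  rfl

lemma wordSum_comp (w : FreeGroup ℕ) (θ : A →+ B) (c : ℕ → A) :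
    wordSum w (fun n => θ (c n)) = θ (wordSum w c) := by
  have h : (FreeGroup.lift (fun n : ℕ => Multiplicative.ofAdd (θ (c n))))
      = (AddMonoidHom.toMultiplicative θ).comp
          (FreeGroup.lift (fun n : ℕ => Multiplicative.ofAdd (c n))) := by
    apply FreeGroup.ext_hom; intro a; simp
  simp only [wordSum_apply, h, MonoidHom.comp_apply, AddMonoidHom.toMultiplicative_apply_apply]
  simp

lemma wordSum_eq_zero (w : FreeGroup ℕ) (c : ℕ → A)
    (hc : ∀ x ∈ w.toWord, c x.1 = 0) : wordSum w c = 0 := by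
  rw [wordSum_apply]
  have : FreeGroup.lift (fun n => Multiplicative.ofAdd (c n)) w = 1 := by
    conv_lhs => rw [← FreeGroup.mk_toWord (x := w)]
    rw [FreeGroup.lift_mk]
    apply List.prod_eq_one
    intro x hx
    rcases List.mem_map.1 hx with ⟨y, hy, rfl⟩
    rcases y with ⟨n, bb⟩
    have := hc _ hy
    cases bb <;> simp [this]
  rw [this]
  simp

/-- the set of letters of a word -/
def letters (w : FreeGroup ℕ) : Finset ℕ := (w.toWord.map Prod.fst).toFinset

lemma wordSum_decomp (w : FreeGroup ℕ) (c : ℕ → A) :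
    wordSum w c = ∑ n ∈ letters w,
      (wordSum w (fun m => if m = n then (1 : ℤ) else 0)) • c n := by
  classical
  have h1 : wordSum w c = wordSum w (fun m => if m ∈ letters w then c m else 0) := by
    have hz : wordSum w (c - fun m => if m ∈ letters w then c m else 0) = 0 := by
      apply wordSum_eq_zero
      intro x hx
      have hmem : x.1 ∈ letters w := List.mem_toFinset.2 (List.mem_map.2 ⟨x, hx, rfl⟩)
      simp [hmem]
    rw [map_sub, sub_eq_zero] at hz
    exact hz
  have h2 : (fun m => if m ∈ letters w then c m else 0)
      = ∑ n ∈ letters w, (fun m => (zmultiplesHom A (c n)) (if m = n then (1 : ℤ) else 0)) := by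
    funext m
    simp only [Finset.sum_apply, zmultiplesHom_apply, ite_smul, one_smul, zero_smul]
    exact (Finset.sum_ite_eq (letters w) m c).symm
  rw [h1, h2, map_sum]
  refine Finset.sum_congr rfl (fun n _ => ?_)
  rw [wordSum_comp w (zmultiplesHom A (c n))]
  simp

lemma exists_gen (w : FreeGroup ℕ) :
    ∃ g : ℤ, ∀ X : ℤ, (∃ t : ℕ → ℤ, wordSum w t = X) ↔ g ∣ X := by
  obtain ⟨g, hg⟩ := Int.subgroup_cyclic (wordSum (A := ℤ) w).range
  refine ⟨g, fun X => ?_⟩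
  have h1 : X ∈ (wordSum (A := ℤ) w).range ↔ g ∣ X := by
    rw [hg, AddSubgroup.mem_closure_singleton]
    constructor
    · rintro ⟨n, rfl⟩; exact ⟨n, by rw [smul_eq_mul, mul_comm]⟩
    · rintro ⟨n, rfl⟩; exact ⟨n, by rw [smul_eq_mul, mul_comm]⟩
  rw [← h1]
  simp [AddMonoidHom.mem_range, eq_comm]

end VCAux

/-- The image of `f : H →* G` is a verbally closed subgroup of `G`: every equation
`w(x, y, …) = h` with `h ∈ H` which is solvable in `G` is solvable in `H`. -/
def VerballyClosedHom {H G : Type} [Group H] [Group G] (f : H →* G) : Prop :=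
  ∀ (w : FreeGroup ℕ) (h : H),
    (∃ φ : ℕ → G, FreeGroup.lift φ w = f h) → ∃ ψ : ℕ → H, FreeGroup.lift ψ w = h

/-- The diagonal homomorphism `H →* (S → H)`. -/
def diagPi (S H : Type) [Group H] : H →* (S → H) where
  toFun h := fun _ => h
  map_one' := rfl
  map_mul' _ _ := rfl

/-- Verbal-closedness lemma: let `b ∈ H` with `b ^ p ^ k` central, `S` a finite set, `F` a
subgroup of the group of functions `S → ZMod p^k` each of whose elements vanishes somewhere,
and `G = F ⋉ ∏_{s ∈ S} H_s` where `f ∈ F` acts on the `s`-th copy by conjugation by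
`b ^ f(s)`. Then the diagonal copy of `H` is verbally closed in `G`. -/
theorem verbal_closedness_lemma (H : Type) [Group H] (p k : ℕ) (hp : p.Prime) (hk : 1 ≤ k)
    (b : H) (hb : b ^ p ^ k ∈ Subgroup.center H)
    (S : Type) [Fintype S] (F : AddSubgroup (S → ZMod (p ^ k)))
    (hvanish : ∀ f : F, ∃ s : S, (f : S → ZMod (p ^ k)) s = 0)
    (φ : Multiplicative F →* MulAut (S → H))
    (hφ : ∀ (f : F) (d : S → H) (s : S) (j : ℤ),
      (j : ZMod (p ^ k)) = (f : S → ZMod (p ^ k)) s →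
      φ (Multiplicative.ofAdd f) d s = b ^ (-j) * d s * b ^ j) :
    VerballyClosedHom
      ((SemidirectProduct.inl : (S → H) →* (S → H) ⋊[φ] Multiplicative F).comp (diagPi S H)) := by
  classical
  intro w h hsol
  obtain ⟨c, hc⟩ := hsol
  haveI : NeZero (p ^ k) := ⟨pow_ne_zero _ hp.pos.ne'⟩
  -- the F-components of the solution
  set fn : ℕ → F := fun n => Multiplicative.toAdd (c n).right with hfndef
  obtain ⟨g, hgen⟩ := VCAux.exists_gen w
  have hdvd : ∀ n : ℕ, g ∣ VCAux.wordSum w (fun m => if m = n then (1 : ℤ) else 0) :=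
    fun n => (hgen _).mp ⟨_, rfl⟩
  choose q hq using hdvd
  -- the element of F whose vanishing point we use
  obtain ⟨s, hs⟩ := hvanish (∑ n ∈ VCAux.letters w, q n • fn n)
  set v : ℕ → ℤ := fun n => (((fn n : S → ZMod (p ^ k)) s).val : ℤ) with hvdef
  have hvcast : ∀ n, ((v n : ℤ) : ZMod (p ^ k)) = (fn n : S → ZMod (p ^ k)) s := by
    intro n
    simp only [hvdef, Int.cast_natCast]
    rw [ZMod.natCast_val, ZMod.cast_id]
  -- divisibility
  set B : ℤ := ∑ n ∈ VCAux.letters w, q n * v n with hBdef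
  have hBz : ((B : ZMod (p ^ k))) = 0 := by
    have hcoe : ((((∑ n ∈ VCAux.letters w, q n • fn n : F)) : S → ZMod (p ^ k))) s
        = ∑ n ∈ VCAux.letters w, (q n : ZMod (p ^ k)) * ((fn n : S → ZMod (p ^ k)) s) := by
      have h0 : ((((∑ n ∈ VCAux.letters w, q n • fn n : F)) : S → ZMod (p ^ k)))
          = ∑ n ∈ VCAux.letters w, ((q n • fn n : F) : S → ZMod (p ^ k)) :=
        map_sum F.subtype _ _
      rw [h0, Finset.sum_apply]
      refine Finset.sum_congr rfl (fun n _ => ?_)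
      have hsm : ((q n • fn n : F) : S → ZMod (p ^ k))
          = q n • ((fn n : F) : S → ZMod (p ^ k)) := rfl
      rw [hsm, Pi.smul_apply, zsmul_eq_mul]
    rw [hBdef]
    push_cast
    have h1 : ∑ x ∈ VCAux.letters w, (q x : ZMod (p ^ k)) * ((v x : ℤ) : ZMod (p ^ k))
        = ∑ n ∈ VCAux.letters w, (q n : ZMod (p ^ k)) * ((fn n : S → ZMod (p ^ k)) s) :=
      Finset.sum_congr rfl (fun n _ => by rw [hvcast n])
    rw [h1, ← hcoe, hs]
  have hB2 : ((p : ℤ) ^ k) ∣ B := by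
    have := (ZMod.intCast_zmod_eq_zero_iff_dvd B (p ^ k)).1 hBz
    exact_mod_cast this
  obtain ⟨M, hM⟩ := hB2
  obtain ⟨t, ht⟩ := (hgen (-(g * M))).2 ⟨-M, by ring⟩
  set j : ℕ → ℤ := fun n => v n + (p : ℤ) ^ k * t n with hjdef
  have hjcast : ∀ n, ((j n : ℤ) : ZMod (p ^ k)) = (fn n : S → ZMod (p ^ k)) s := by
    intro n
    simp only [hjdef]
    push_cast
    rw [hvcast n]
    have : ((p : ZMod (p ^ k)) ^ k) = 0 := by
      have := ZMod.natCast_self (p ^ k)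
      push_cast at this
      exact this
    rw [this]
    ring
  have hwj : VCAux.wordSum w j = 0 := by
    have h1 : j = v + ((p : ℤ) ^ k) • t := by
      funext n; simp [hjdef, smul_eq_mul]
    rw [h1, map_add, map_zsmul, VCAux.wordSum_decomp w v, ht]
    have h2 : ∑ n ∈ VCAux.letters w,
        (VCAux.wordSum w (fun m => if m = n then (1 : ℤ) else 0)) • v n = g * B := by
      rw [hBdef, Finset.mul_sum]
      refine Finset.sum_congr rfl (fun n _ => ?_)
      rw [hq n, smul_eq_mul]; ring
    rw [h2, hM]
    simp only [smul_eq_mul]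
    ring
  have hliftj : FreeGroup.lift (fun n => Multiplicative.ofAdd (j n)) w = 1 := by
    have := hwj
    rw [VCAux.wordSum_apply] at this
    have h2 := congrArg Multiplicative.ofAdd this
    simpa using h2
  -- Part B: the twisted product
  set τ : Multiplicative ℤ →* MulAut H := zpowersHom (MulAut H) (MulAut.conj b)⁻¹ with hτdef
  have hτ : ∀ (r : Multiplicative ℤ) (a : H),
      τ r a = b ^ (-(Multiplicative.toAdd r)) * a * b ^ (Multiplicative.toAdd r) := by
    intro r a
    have h1 : τ r = ((MulAut.conj b)⁻¹) ^ (Multiplicative.toAdd r) := rfl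
    rw [h1, inv_zpow, ← map_zpow]
    rw [MulAut.conj_inv_apply]
    rw [← zpow_neg]
  have hφ' : ∀ (r : Multiplicative F) (d : S → H) (jj : ℤ),
      ((jj : ℤ) : ZMod (p ^ k)) = ((Multiplicative.toAdd r : F) : S → ZMod (p ^ k)) s →
      φ r d s = b ^ (-jj) * d s * b ^ jj := fun r d jj hjj => hφ (Multiplicative.toAdd r) d s jj hjj
  set Aw : FreeGroup ℕ →* (H ⋊[τ] Multiplicative ℤ) :=
    FreeGroup.lift (fun n => SemidirectProduct.inl ((c n).left s)
      * SemidirectProduct.inr (Multiplicative.ofAdd (j n))) with hAwdef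
  have hAwof : ∀ n : ℕ, Aw (FreeGroup.of n) = SemidirectProduct.inl ((c n).left s)
      * SemidirectProduct.inr (Multiplicative.ofAdd (j n)) := fun n => FreeGroup.lift_apply_of
  have hAwleft : ∀ n : ℕ, (Aw (FreeGroup.of n)).left = (c n).left s := by
    intro n
    rw [hAwof n]
    simp [SemidirectProduct.mul_left]
  have hAwright : ∀ n : ℕ, (Aw (FreeGroup.of n)).right = Multiplicative.ofAdd (j n) := by
    intro n
    rw [hAwof n]
    simp [SemidirectProduct.mul_right]
  -- the invariant
  have key : ∀ u : FreeGroup ℕ,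
      (Aw u).left = ((FreeGroup.lift c u).left) s ∧
      (((Multiplicative.toAdd (Aw u).right : ℤ)) : ZMod (p ^ k))
        = ((Multiplicative.toAdd (FreeGroup.lift c u).right : F) : S → ZMod (p ^ k)) s := by
    have hmul : ∀ x y : FreeGroup ℕ,
        ((Aw x).left = ((FreeGroup.lift c x).left) s ∧
          ((Multiplicative.toAdd (Aw x).right : ℤ) : ZMod (p ^ k))
          = ((Multiplicative.toAdd (FreeGroup.lift c x).right : F) : S → ZMod (p ^ k)) s) →
        ((Aw y).left = ((FreeGroup.lift c y).left) s ∧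
          ((Multiplicative.toAdd (Aw y).right : ℤ) : ZMod (p ^ k))
          = ((Multiplicative.toAdd (FreeGroup.lift c y).right : F) : S → ZMod (p ^ k)) s) →
        ((Aw (x * y)).left = ((FreeGroup.lift c (x * y)).left) s ∧
          ((Multiplicative.toAdd (Aw (x * y)).right : ℤ) : ZMod (p ^ k))
          = ((Multiplicative.toAdd (FreeGroup.lift c (x * y)).right : F) : S → ZMod (p ^ k)) s) := by
      rintro x y ⟨ihx1, ihx2⟩ ⟨ihy1, ihy2⟩
      constructor
      · rw [map_mul, map_mul, SemidirectProduct.mul_left, SemidirectProduct.mul_left,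
          Pi.mul_apply, hτ, hφ' ((FreeGroup.lift c x).right) ((FreeGroup.lift c y).left)
            (Multiplicative.toAdd (Aw x).right) ihx2, ihx1, ihy1]
      · rw [map_mul, map_mul, SemidirectProduct.mul_right, SemidirectProduct.mul_right,
          toAdd_mul, toAdd_mul, Int.cast_add, AddSubgroup.coe_add, Pi.add_apply, ihx2, ihy2]
    have hinv : ∀ x : FreeGroup ℕ,
        ((Aw x).left = ((FreeGroup.lift c x).left) s ∧
          ((Multiplicative.toAdd (Aw x).right : ℤ) : ZMod (p ^ k))
          = ((Multiplicative.toAdd (FreeGroup.lift c x).right : F) : S → ZMod (p ^ k)) s) →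
        ((Aw x⁻¹).left = ((FreeGroup.lift c x⁻¹).left) s ∧
          ((Multiplicative.toAdd (Aw x⁻¹).right : ℤ) : ZMod (p ^ k))
          = ((Multiplicative.toAdd (FreeGroup.lift c x⁻¹).right : F) : S → ZMod (p ^ k)) s) := by
      rintro x ⟨ih1, ih2⟩
      have hr2 : ((Multiplicative.toAdd (Aw x⁻¹).right : ℤ) : ZMod (p ^ k))
          = ((Multiplicative.toAdd (FreeGroup.lift c x⁻¹).right : F) : S → ZMod (p ^ k)) s := by
        rw [map_inv, map_inv, SemidirectProduct.inv_right, SemidirectProduct.inv_right,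
          toAdd_inv, toAdd_inv, Int.cast_neg, AddSubgroup.coe_neg, Pi.neg_apply, ih2]
      refine ⟨?_, hr2⟩
      rw [map_inv, map_inv, SemidirectProduct.inv_left, SemidirectProduct.inv_left, hτ]
      rw [hφ' ((FreeGroup.lift c x).right)⁻¹ ((FreeGroup.lift c x).left)⁻¹
        (Multiplicative.toAdd ((Aw x).right)⁻¹) ?hcong]
      case hcong =>
        rw [toAdd_inv, toAdd_inv, Int.cast_neg, AddSubgroup.coe_neg, Pi.neg_apply, ih2]
      rw [Pi.inv_apply, ih1]
    intro u
    induction u using FreeGroup.induction_on with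
    | C1 => constructor <;> simp
    | of n =>
      refine ⟨?_, ?_⟩
      · show (Aw (FreeGroup.of n)).left = ((FreeGroup.lift c (FreeGroup.of n)).left) s
        rw [hAwleft n, FreeGroup.lift_apply_of]
      · show ((Multiplicative.toAdd (Aw (FreeGroup.of n)).right : ℤ) : ZMod (p ^ k))
          = ((Multiplicative.toAdd (FreeGroup.lift c (FreeGroup.of n)).right : F)
              : S → ZMod (p ^ k)) s
        rw [hAwright n, FreeGroup.lift_apply_of]
        exact hjcast n
    | inv_of n ih => exact hinv _ ih
    | mul x y ihx ihy => exact hmul x y ihx ihy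
  obtain ⟨kl, kr⟩ := key w
  rw [hc] at kl kr
  have hleft : (Aw w).left = h := by
    rw [kl]; rfl
  have hright : (Aw w).right = 1 := by
    have hcomp : (SemidirectProduct.rightHom).comp Aw
        = FreeGroup.lift (fun n => Multiplicative.ofAdd (j n)) := by
      apply FreeGroup.ext_hom
      intro a
      rw [MonoidHom.comp_apply, SemidirectProduct.rightHom_eq_right, hAwright a,
        FreeGroup.lift_apply_of]
    have : SemidirectProduct.rightHom (Aw w) = 1 := by
      have := congrArg (fun f => f w) hcomp
      simp only [MonoidHom.comp_apply] at this
      rw [this, hliftj]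
    rwa [SemidirectProduct.rightHom_eq_right] at this
  -- the retraction
  have compat : ∀ gz : Multiplicative ℤ,
      (MonoidHom.id H).comp (τ gz).toMonoidHom
        = (MulAut.conj ((zpowersHom H b⁻¹) gz)).toMonoidHom.comp (MonoidHom.id H) := by
    intro gz
    ext a
    simp only [MonoidHom.comp_apply, MonoidHom.id_apply, MulEquiv.coe_toMonoidHom,
      MulAut.conj_apply, zpowersHom_apply]
    rw [hτ]
    group
  set r : (H ⋊[τ] Multiplicative ℤ) →* H :=
    SemidirectProduct.lift (MonoidHom.id H) (zpowersHom H b⁻¹) compat with hrdef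
  refine ⟨fun n => (c n).left s * (b⁻¹) ^ (j n), ?_⟩
  have hlift : FreeGroup.lift (fun n => (c n).left s * (b⁻¹) ^ (j n)) = r.comp Aw := by
    apply FreeGroup.ext_hom
    intro a
    rw [MonoidHom.comp_apply, FreeGroup.lift_apply_of, hAwof a, map_mul,
      SemidirectProduct.lift_inl, SemidirectProduct.lift_inr]
    simp [zpowersHom_apply]
  rw [hlift, MonoidHom.comp_apply]
  rw [← SemidirectProduct.inl_left_mul_inr_right (Aw w), hleft, hright]
  simp [hrdef]
end

section
/- Any direct factor of a strongly verbally closed group is strongly verbally closed. More precisely, if A × B is strongly verbally closed, then A is strongly verbally closed; this follows from the fact that for any group à containing A, the subgroup A is verbally (respectively, algebraically) closed in à if and only if A × B is verbally (respectively, algebraically) closed in à × B. -/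
lemma freeLift_comp {G K : Type} [Group G] [Group K] (g : G →* K) (φ : ℕ → G) :
    g.comp (FreeGroup.lift φ) = FreeGroup.lift (g ∘ φ) :=
  FreeGroup.ext_hom _ _ (fun a => by simp)

lemma freeLift_apply {G K : Type} [Group G] [Group K] (g : G →* K) (φ : ℕ → G)
    (w : FreeGroup ℕ) : g (FreeGroup.lift φ w) = FreeGroup.lift (g ∘ φ) w :=
  DFunLike.congr_fun (freeLift_comp g φ) w

lemma coprod_map_lift {M N P Q : Type} [Monoid M] [Monoid N] [Monoid P] [Monoid Q]
    (g : M →* P) (h₁ : P →* Q) (h₂ : N →* Q) (x : Monoid.Coprod M N) :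
    Monoid.Coprod.lift h₁ h₂ (Monoid.Coprod.map g (MonoidHom.id N) x)
      = Monoid.Coprod.lift (h₁.comp g) h₂ x :=
  DFunLike.congr_fun (show (Monoid.Coprod.lift h₁ h₂).comp (Monoid.Coprod.map g (MonoidHom.id N))
    = Monoid.Coprod.lift (h₁.comp g) h₂ from Monoid.Coprod.hom_ext rfl rfl) x

lemma coprod_comp_lift {M N P Q : Type} [Monoid M] [Monoid N] [Monoid P] [Monoid Q]
    (g : P →* Q) (h₁ : M →* P) (h₂ : N →* P) (x : Monoid.Coprod M N) :
    g (Monoid.Coprod.lift h₁ h₂ x) = Monoid.Coprod.lift (g.comp h₁) (g.comp h₂) x :=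
  DFunLike.congr_fun (Monoid.Coprod.comp_lift g h₁ h₂) x



/-- The image of `f : H →* G` is an algebraically closed subgroup of `G`: every finite system
of equations with coefficients in `H` (elements of the free product `H ∗ F(x, y, …)`) which is
solvable in `G` is solvable in `H`. -/
def AlgebraicallyClosedHom {H G : Type} [Group H] [Group G] (f : H →* G) : Prop :=
  ∀ (m : ℕ) (eqs : Fin m → Monoid.Coprod H (FreeGroup ℕ)),
    (∃ φ : ℕ → G, ∀ i, Monoid.Coprod.lift f (FreeGroup.lift φ) (eqs i) = 1) →
    ∃ ψ : ℕ → H, ∀ i, Monoid.Coprod.lift (MonoidHom.id H) (FreeGroup.lift ψ) (eqs i) = 1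

/-- A group `H` is strongly verbally closed if it is algebraically closed in every group
containing it as a verbally closed subgroup. -/
def StronglyVerballyClosed (H : Type) [Group H] : Prop :=
  ∀ (G : Type) [Group G] (f : H →* G), Function.Injective f →
    VerballyClosedHom f → AlgebraicallyClosedHom f

lemma vc_iff {A B A' : Type} [Group A] [Group B] [Group A'] (f : A →* A') :
    VerballyClosedHom f ↔ VerballyClosedHom (f.prodMap (MonoidHom.id B)) := by
  constructor
  · rintro hf w ⟨a, b⟩ ⟨φ, hφ⟩
    have h1 : FreeGroup.lift ((MonoidHom.fst A' B) ∘ φ) w = f a := by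
      rw [← freeLift_apply, hφ]; rfl
    obtain ⟨ψ₁, hψ₁⟩ := hf w a ⟨_, h1⟩
    refine ⟨fun n => (ψ₁ n, (φ n).2), Prod.ext ?_ ?_⟩
    · show (MonoidHom.fst A B) (FreeGroup.lift (fun n => (ψ₁ n, (φ n).2)) w) = a
      rw [freeLift_apply]
      exact hψ₁
    · show (MonoidHom.snd A B) (FreeGroup.lift (fun n => (ψ₁ n, (φ n).2)) w) = b
      rw [freeLift_apply]
      have h3 := freeLift_apply (MonoidHom.snd A' B) φ w
      rw [hφ] at h3
      exact h3.symm
  · rintro hf w a ⟨φ, hφ⟩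
    have h1 : FreeGroup.lift (fun n => ((φ n, 1) : A' × B)) w
        = (f.prodMap (MonoidHom.id B)) (a, 1) := by
      have := freeLift_apply (MonoidHom.inl A' B) φ w
      rw [hφ] at this
      simpa [Function.comp_def] using this.symm
    obtain ⟨ψ, hψ⟩ := hf w (a, 1) ⟨_, h1⟩
    refine ⟨fun n => (ψ n).1, ?_⟩
    have := freeLift_apply (MonoidHom.fst A B) ψ w
    rw [hψ] at this
    simpa [Function.comp_def] using this.symm

lemma ac_iff {A B A' : Type} [Group A] [Group B] [Group A'] (f : A →* A') :
    AlgebraicallyClosedHom f ↔ AlgebraicallyClosedHom (f.prodMap (MonoidHom.id B)) := by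
  constructor
  · rintro hf m eqs ⟨φ, hφ⟩
    have hA : ∀ i, Monoid.Coprod.lift f (FreeGroup.lift ((MonoidHom.fst A' B) ∘ φ))
        (Monoid.Coprod.map (MonoidHom.fst A B) (MonoidHom.id _) (eqs i)) = 1 := by
      intro i
      rw [coprod_map_lift]
      have e := coprod_comp_lift (MonoidHom.fst A' B) (f.prodMap (MonoidHom.id B))
        (FreeGroup.lift φ) (eqs i)
      rw [hφ i, map_one, freeLift_comp] at e
      exact e.symm
    obtain ⟨ψ₁, hψ₁⟩ := hf m _ ⟨_, hA⟩
    refine ⟨fun n => (ψ₁ n, (φ n).2), fun i => Prod.ext ?_ ?_⟩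
    · show (MonoidHom.fst A B) (Monoid.Coprod.lift (MonoidHom.id _)
        (FreeGroup.lift (fun n => (ψ₁ n, (φ n).2))) (eqs i)) = 1
      have e1 := coprod_comp_lift (MonoidHom.fst A B) (MonoidHom.id (A × B))
        (FreeGroup.lift (fun n => (ψ₁ n, (φ n).2))) (eqs i)
      rw [freeLift_comp] at e1
      rw [e1]
      have e2 := coprod_map_lift (MonoidHom.fst A B) (MonoidHom.id A)
        (FreeGroup.lift ψ₁) (eqs i)
      have := hψ₁ i
      rw [e2] at this
      exact this
    · show (MonoidHom.snd A B) (Monoid.Coprod.lift (MonoidHom.id _)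
        (FreeGroup.lift (fun n => (ψ₁ n, (φ n).2))) (eqs i)) = 1
      have e4 := coprod_comp_lift (MonoidHom.snd A B) (MonoidHom.id (A × B))
        (FreeGroup.lift (fun n => (ψ₁ n, (φ n).2))) (eqs i)
      rw [freeLift_comp] at e4
      rw [e4]
      have e3 := coprod_comp_lift (MonoidHom.snd A' B) (f.prodMap (MonoidHom.id B))
        (FreeGroup.lift φ) (eqs i)
      rw [hφ i, map_one, freeLift_comp] at e3
      exact e3.symm
  · rintro hf m eqs ⟨φ, hφ⟩
    have hsolve : ∀ i, Monoid.Coprod.lift (f.prodMap (MonoidHom.id B))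
        (FreeGroup.lift (fun n => ((φ n, 1) : A' × B)))
        (Monoid.Coprod.map (MonoidHom.inl A B) (MonoidHom.id _) (eqs i)) = 1 := by
      intro i
      rw [coprod_map_lift]
      have e := coprod_comp_lift (MonoidHom.inl A' B) f (FreeGroup.lift φ) (eqs i)
      rw [hφ i, map_one, freeLift_comp] at e
      exact e.symm
    obtain ⟨ψ', hψ'⟩ := hf m _ ⟨_, hsolve⟩
    refine ⟨fun n => (ψ' n).1, fun i => ?_⟩
    have e1 := coprod_comp_lift (MonoidHom.fst A B) (MonoidHom.id (A × B))
      (FreeGroup.lift ψ') (Monoid.Coprod.map (MonoidHom.inl A B) (MonoidHom.id _) (eqs i))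
    rw [hψ' i, map_one, freeLift_comp] at e1
    have e2 := coprod_map_lift (MonoidHom.inl A B)
      ((MonoidHom.fst A B).comp (MonoidHom.id (A × B)))
      (FreeGroup.lift ((MonoidHom.fst A B) ∘ ψ')) (eqs i)
    rw [e2] at e1
    exact e1.symm

/-- Any direct factor of a strongly verbally closed group is strongly verbally closed;
this follows since, for any overgroup `A'` of `A`, the subgroup `A` is verbally
(resp. algebraically) closed in `A'` iff `A × B` is verbally (resp. algebraically)
closed in `A' × B`. -/
theorem direct_factor_svc (A B : Type) [Group A] [Group B] :
    (StronglyVerballyClosed (A × B) → StronglyVerballyClosed A) ∧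
    ∀ (A' : Type) [Group A'], ∀ f : A →* A', Function.Injective f →
      ((VerballyClosedHom f ↔ VerballyClosedHom (f.prodMap (MonoidHom.id B))) ∧
       (AlgebraicallyClosedHom f ↔ AlgebraicallyClosedHom (f.prodMap (MonoidHom.id B)))) := by
  have hvc : ∀ (A' : Type) [Group A'] (f : A →* A'),
      VerballyClosedHom f ↔ VerballyClosedHom (f.prodMap (MonoidHom.id B)) :=
    fun A' _ f => vc_iff f
  have hac : ∀ (A' : Type) [Group A'] (f : A →* A'),
      AlgebraicallyClosedHom f ↔ AlgebraicallyClosedHom (f.prodMap (MonoidHom.id B)) :=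
    fun A' _ f => ac_iff f
  refine ⟨?_, fun A' _ f _ => ⟨hvc A' f, hac A' f⟩⟩
  intro hAB G _ g hg hv
  have hg' : Function.Injective (g.prodMap (MonoidHom.id B)) := by
    intro x y h
    have h1 := congrArg Prod.fst h
    have h2 := congrArg Prod.snd h
    exact Prod.ext (hg h1) h2
  exact (hac G g).mpr (hAB (G × B) (g.prodMap (MonoidHom.id B)) hg' ((hvc G g).mp hv))
end

section
/- (Schur's transfer) Let H be a group and F a central subgroup of H of finite index d = |H : F|. Then the map τ : H → F, x ↦ x^d, is a group homomorphism. -/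
/-- Schur's transfer: if `F` is a central subgroup of `H` of finite index `d`, then
`x ↦ x^d` maps `H` into `F` and is a group homomorphism. -/
theorem schur_transfer {H : Type*} [Group H] (F : Subgroup H) (hF : F ≤ Subgroup.center H)
    (d : ℕ) (hd : F.index = d) (hd0 : d ≠ 0) :
    (∀ x : H, x ^ d ∈ F) ∧ ∀ x y : H, (x * y) ^ d = x ^ d * y ^ d := by
  subst hd
  haveI : F.FiniteIndex := ⟨hd0⟩
  haveI : F.Normal := by
    constructor
    intro n hn g
    have hc := (Subgroup.mem_center_iff.mp (hF hn)) g
    simpa [hc, mul_assoc] using hn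
  haveI hZ : (Subgroup.center H).FiniteIndex := Subgroup.finiteIndex_of_le hF
  refine ⟨fun x => F.pow_index_mem x, fun x y => ?_⟩
  set n := (Subgroup.center H).index with hn
  set k := F.relIndex (Subgroup.center H) with hk
  have hdn : F.index = n * k := by
    rw [mul_comm]
    exact (Subgroup.relIndex_mul_index hF).symm
  have hhom : (x * y) ^ n = x ^ n * y ^ n := by
    have h1 := congrArg (Subtype.val) (map_mul (MonoidHom.transferCenterPow H) x y)
    rw [Subgroup.coe_mul, MonoidHom.transferCenterPow_apply,
      MonoidHom.transferCenterPow_apply, MonoidHom.transferCenterPow_apply] at h1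
    exact h1
  have hxc : x ^ n ∈ Subgroup.center H := by
    simpa [MonoidHom.transferCenterPow_apply] using (MonoidHom.transferCenterPow H x).2
  have hyc : y ^ n ∈ Subgroup.center H := by
    simpa [MonoidHom.transferCenterPow_apply] using (MonoidHom.transferCenterPow H y).2
  rw [hdn, pow_mul, pow_mul, pow_mul, hhom]
  have hcomm : Commute (x ^ n) (y ^ n) :=
    ((Subgroup.mem_center_iff.mp hxc) (y ^ n)).symm
  exact hcomm.mul_pow k
end

section
/- (Schur) If the centre Z(G) of a group G has finite index in G, then the commutator subgroup [G,G] is finite. -/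
open scoped commutatorElement

lemma commutator_mul_center_left {G : Type*} [Group G] (g h z : G)
    (hz : ∀ x, x * z = z * x) : ⁅g * z, h⁆ = ⁅g, h⁆ := by
  simp only [commutatorElement_def, mul_inv_rev]
  calc g * z * h * (z⁻¹ * g⁻¹) * h⁻¹
      = g * (z * h) * (z⁻¹ * g⁻¹) * h⁻¹ := by group
    _ = g * (h * z) * (z⁻¹ * g⁻¹) * h⁻¹ := by rw [← hz h]
    _ = g * h * g⁻¹ * h⁻¹ := by group

lemma commutator_mul_center_right {G : Type*} [Group G] (g h w : G)
    (hw : ∀ x, x * w = w * x) : ⁅g, h * w⁆ = ⁅g, h⁆ := by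
  simp only [commutatorElement_def, mul_inv_rev]
  calc g * (h * w) * g⁻¹ * (w⁻¹ * h⁻¹)
      = g * h * (w * g⁻¹) * w⁻¹ * h⁻¹ := by group
    _ = g * h * (g⁻¹ * w) * w⁻¹ * h⁻¹ := by rw [hw g⁻¹]
    _ = g * h * g⁻¹ * h⁻¹ := by group

lemma commutatorSet_finite_of_center_finiteIndex {G : Type*} [Group G]
    (h : (Subgroup.center G).FiniteIndex) : Finite (commutatorSet G) := by
  haveI := h
  haveI : Finite (G ⧸ Subgroup.center G) :=
    Subgroup.finite_quotient_of_finiteIndex (H := Subgroup.center G)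
  let φ : G ⧸ Subgroup.center G → G ⧸ Subgroup.center G → G :=
    Quotient.lift₂ (fun g h => ⁅g, h⁆) (by
      intro g h g' h' hg hh
      have hg' : g⁻¹ * g' ∈ Subgroup.center G := QuotientGroup.leftRel_apply.mp hg
      have hh' : h⁻¹ * h' ∈ Subgroup.center G := QuotientGroup.leftRel_apply.mp hh
      rw [Subgroup.mem_center_iff] at hg' hh'
      obtain ⟨z, hz, rfl⟩ : ∃ z, (∀ x, x * z = z * x) ∧ g' = g * z :=
        ⟨g⁻¹ * g', hg', by group⟩
      obtain ⟨w, hw, rfl⟩ : ∃ w, (∀ x, x * w = w * x) ∧ h' = h * w :=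
        ⟨h⁻¹ * h', hh', by group⟩
      show ⁅g, h⁆ = ⁅g * z, h * w⁆
      rw [commutator_mul_center_left g (h * w) z hz,
          commutator_mul_center_right g h w hw])
  have hfin : (Set.range (Function.uncurry φ)).Finite := Set.finite_range _
  have hsub : commutatorSet G ⊆ Set.range (Function.uncurry φ) := by
    rintro x ⟨g, h, rfl⟩
    exact ⟨(↑g, ↑h), rfl⟩
  exact hfin.subset hsub

/-- Schur: if the centre of a group has finite index, then the commutator subgroup is finite. -/
theorem schur_commutator_finite {G : Type*} [Group G]
    (h : (Subgroup.center G).FiniteIndex) : Finite (commutator G) := by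
  haveI := commutatorSet_finite_of_center_finiteIndex h
  infer_instance
end
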